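/- arXiv:1902.09980 — 7 statements merged into one kernel-verified Lean document; each statement's English description precedes it below -/
import Mathlib

section
/- In a single-decision CID graph, removing all nonrequisite information links (information links from observations that fail the observation incentive criterion) yields a reduced graph in which, for any parameterization, the optimal value equals the optimal value in the original graph. -/
/-- A directed acyclic graph on node set `V`. -/
structure DAG (V : Type) where
  E : V → V → Prop
  acyclic : ∀ v, ¬ Relation.TransGen E v v

namespace DAG

variable {V : Type}

/-- A three-node segment `a — b — c` of an undirected path is active given `Z`:
colliders are active iff some descendant of the middle node (including itself) is in `Z`,
chains and forks are active iff the middle node is not in `Z`. -/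
def ActiveTriple (G : DAG V) (Z : Set V) (a b c : V) : Prop :=
  (G.E a b ∧ G.E c b ∧ ∃ w, Relation.ReflTransGen G.E b w ∧ w ∈ Z) ∨
  (¬ (G.E a b ∧ G.E c b) ∧ b ∉ Z)

/-- An undirected path: consecutive nodes are joined by an edge in either direction. -/
def IsUPath (G : DAG V) : List V → Prop
  | [] => False
  | [_] => True
  | x :: y :: rest => (G.E x y ∨ G.E y x) ∧ IsUPath G (y :: rest)

/-- A path is active given `Z` if every three-node segment is active. -/
def ActivePath (G : DAG V) (Z : Set V) : List V → Prop
  | x :: y :: z :: rest => ActiveTriple G Z x y z ∧ ActivePath G Z (y :: z :: rest)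
  | _ => True

/-- `x` and `y` are d-connected given `Z` if some undirected path between them is active. -/
def DConn (G : DAG V) (Z : Set V) (x y : V) : Prop :=
  ∃ p : List V, p.Nodup ∧ G.IsUPath p ∧ p.head? = some x ∧ p.getLast? = some y ∧
    G.ActivePath Z p

end DAG

/-- A single-decision causal influence diagram graph: a DAG with a decision node `dec`
and a set of utility nodes `util`. -/
structure CID (V : Type) extends DAG V where
  dec : V
  util : Finset V
  dec_not_util : dec ∉ util

/-- A directed path (allowing length 0) from `x` to `u` that avoids the node `d`. -/
def DirPathAvoiding {V : Type} (E : V → V → Prop) (x u d : V) : Prop :=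
  ∃ p : List V, p ≠ [] ∧ p.head? = some x ∧ p.getLast? = some u ∧
    List.Chain' E p ∧ d ∉ p

namespace CID

variable {V : Type}

/-- The decision context: the parents (observations) of the decision node. -/
def Pa (C : CID V) : Set V := {u | C.E u C.dec}

/-- An observation `O ∈ Pa_D` is requisite if it is d-connected to a utility node
descending from the decision, conditioning on `{D} ∪ Pa_D \ {O}`. -/
def Requisite (C : CID V) (O : V) : Prop :=
  O ∈ C.Pa ∧ ∃ u ∈ C.util, Relation.ReflTransGen C.E C.dec u ∧
    C.toDAG.DConn ({C.dec} ∪ (C.Pa \ {O})) O u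

/-- A nonrequisite observation. -/
def Nonrequisite (C : CID V) (O : V) : Prop :=
  O ∈ C.Pa ∧ ¬ C.Requisite O

/-- The edge relation of the reduced graph `G*`: all nonrequisite information links
(edges into the decision from nonrequisite observations) are removed. -/
def Ered (C : CID V) : V → V → Prop :=
  fun u v => C.E u v ∧ (v = C.dec → C.Requisite u)

/-- A parameterization of a CID graph: finite domains for every node, conditional
probability distributions for every non-decision node, and a real-valued interpretation
of the outcomes of the (utility) nodes. -/
structure Param [Fintype V] [DecidableEq V] (C : CID V) (val : V → Type)
    [∀ v, Fintype (val v)] where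
  cpt : ∀ _v : V, (∀ u : V, val u) → ℝ
  cpt_nonneg : ∀ v a, 0 ≤ cpt v a
  cpt_local : ∀ v, v ≠ C.dec → ∀ a b, a v = b v → (∀ u, C.E u v → a u = b u) →
    cpt v a = cpt v b
  cpt_sum : ∀ v, v ≠ C.dec → ∀ a : ∀ u : V, val u,
    ∑ x : val v, cpt v (Function.update a v x) = 1
  uval : ∀ v : V, val v → ℝ

/-- A policy whose decision may depend (only) on the observations in `Obs`:
a conditional distribution for the decision given the values of the nodes in `Obs`. -/
structure Pol [Fintype V] [DecidableEq V] (C : CID V) (val : V → Type)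
    [∀ v, Fintype (val v)] (Obs : Set V) where
  p : (∀ v : V, val v) → ℝ
  nonneg : ∀ a, 0 ≤ p a
  depends : ∀ a b, a C.dec = b C.dec → (∀ u ∈ Obs, a u = b u) → p a = p b
  sum : ∀ a : ∀ v : V, val v, ∑ d : val C.dec, p (Function.update a C.dec d) = 1

/-- The value (expected sum of utilities) of a decision rule `p` under a
parameterization `P`. -/
noncomputable def value [Fintype V] [DecidableEq V] (C : CID V) {val : V → Type}
    [∀ v, Fintype (val v)] (P : C.Param val) (p : (∀ v : V, val v) → ℝ) : ℝ :=
  ∑ a : ∀ v : V, val v,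
    (p a * ∏ v ∈ Finset.univ.erase C.dec, P.cpt v a) * ∑ u ∈ C.util, P.uval u (a u)

end CID


/-! ### Auxiliary development -/

open Classical
noncomputable section
namespace VOIAux

open List Relation

variable {V : Type}

section Paths
variable (G : DAG V)

lemma no_self_edge {v : V} (h : G.E v v) : False :=
  G.acyclic v (Relation.TransGen.single h)

lemma no_two_cycle {v w : V} (h : G.E v w) (h' : G.E w v) : False :=
  G.acyclic v ((Relation.TransGen.single h).tail h')

lemma no_rtg_cycle {v w : V} (h : Relation.ReflTransGen G.E v w) (h' : G.E w v) : False :=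
  G.acyclic v (Relation.TransGen.tail' h h')

variable {G}

lemma isUPath_iff_chain' : ∀ {p : List V},
    G.IsUPath p ↔ p ≠ [] ∧ p.Chain' (fun x y => G.E x y ∨ G.E y x)
  | [] => by simp [DAG.IsUPath]
  | [x] => by simp [DAG.IsUPath, List.Chain']
  | x :: y :: rest => by
      rw [DAG.IsUPath, isUPath_iff_chain', List.Chain', List.Chain', List.isChain_cons_cons]
      constructor
      · rintro ⟨e, _, hc⟩; exact ⟨by simp, e, hc⟩
      · rintro ⟨_, e, hc⟩; exact ⟨e, by simp, hc⟩

lemma triple_symm {Z : Set V} {a b c : V} (h : G.ActiveTriple Z a b c) :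
    G.ActiveTriple Z c b a := by
  rcases h with ⟨h1, h2, h3⟩ | ⟨h1, h2⟩
  · exact Or.inl ⟨h2, h1, h3⟩
  · exact Or.inr ⟨fun hc => h1 ⟨hc.2, hc.1⟩, h2⟩

lemma getLast?_cons_ne {l : List V} (hne : l ≠ []) (a : V) :
    (a :: l).getLast? = l.getLast? := by
  cases l with
  | nil => exact absurd rfl hne
  | cons b l => simp

lemma active_tail {Z : Set V} : ∀ {p : List V}, G.ActivePath Z p → G.ActivePath Z p.tail
  | [] => fun _ => trivial
  | [_] => fun _ => trivial
  | [_, _] => fun _ => trivial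
  | _ :: _ :: _ :: _ => fun h => h.2

lemma active_suffix {Z : Set V} : ∀ (p : List V) {q : List V},
    G.ActivePath Z (p ++ q) → G.ActivePath Z q
  | [], _, h => h
  | x :: p, q, h => by
      have := active_tail (p := (x :: p) ++ q) h
      exact active_suffix p this

lemma active_prefix {Z : Set V} : ∀ {p q : List V},
    G.ActivePath Z (p ++ q) → G.ActivePath Z p
  | [], _, _ => trivial
  | [_], _, _ => trivial
  | [_, _], _, _ => trivial
  | x :: y :: z :: p, q, h => by
      rcases h with ⟨ht, h2⟩
      exact ⟨ht, active_prefix (p := y :: z :: p) h2⟩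

lemma upath_prefix {p q : List V} (h : G.IsUPath (p ++ q)) (hp : p ≠ []) : G.IsUPath p := by
  rw [isUPath_iff_chain'] at h ⊢
  exact ⟨hp, (List.isChain_append.mp h.2).1⟩

lemma upath_suffix {p q : List V} (h : G.IsUPath (p ++ q)) (hq : q ≠ []) : G.IsUPath q := by
  rw [isUPath_iff_chain'] at h ⊢
  exact ⟨hq, (List.isChain_append.mp h.2).2.1⟩

lemma head?_append_left {p q : List V} (hp : p ≠ []) : (p ++ q).head? = p.head? := by
  cases p with
  | nil => exact absurd rfl hp
  | cons a l => simp

/-- every three consecutive elements of an active path form an active triple -/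
lemma active_triple_of_decomp {Z : Set V} {p l₁ l₂ : List V} {x y z : V}
    (h : G.ActivePath Z p) (hd : p = l₁ ++ x :: y :: z :: l₂) :
    G.ActiveTriple Z x y z := by
  subst hd
  exact (active_suffix l₁ h).1

lemma active_of_triples {Z : Set V} : ∀ {p : List V},
    (∀ l₁ x y z l₂, p = l₁ ++ x :: y :: z :: l₂ → G.ActiveTriple Z x y z) →
    G.ActivePath Z p
  | [] , _ => trivial
  | [_], _ => trivial
  | [_, _], _ => trivial
  | a :: b :: c :: p, h => by
      refine ⟨h [] a b c p rfl, active_of_triples ?_⟩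
      intro l₁ x y z l₂ hd
      exact h (a :: l₁) x y z l₂ (by simp [hd])

/-- appending a node at the end of an active path -/
lemma active_snoc {Z : Set V} {v : V} : ∀ {p : List V} {w : V},
    G.ActivePath Z p → p.getLast? = some w →
    (∀ x, p.dropLast.getLast? = some x → G.ActiveTriple Z x w v) →
    G.ActivePath Z (p ++ [v])
  | [], _, _, hl, _ => by simp at hl
  | [w'], w, _, hl, _ => by
      simp at hl; trivial
  | [x', w'], w, _, hl, htr => by
      have hw : w' = w := by simpa using hl
      subst hw
      exact ⟨htr x' (by simp), trivial⟩
  | x' :: y' :: z' :: p, w, h, hl, htr => by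
      refine ⟨h.1, ?_⟩
      refine active_snoc h.2 (by simpa using hl) ?_
      intro x hx
      refine htr x ?_
      have hne : (y' :: z' :: p).dropLast ≠ [] := by
        cases p <;> simp
      show (x' :: (y' :: z' :: p).dropLast).getLast? = some x
      rw [getLast?_cons_ne hne]
      exact hx

lemma upath_snoc {p : List V} {w v : V} (h : G.IsUPath p) (hl : p.getLast? = some w)
    (e : G.E w v ∨ G.E v w) : G.IsUPath (p ++ [v]) := by
  rw [isUPath_iff_chain'] at h ⊢
  refine ⟨by simp, List.isChain_append.mpr ⟨h.2, List.isChain_singleton v, ?_⟩⟩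
  intro x hx y hy
  simp at hy
  subst hy
  rw [hl] at hx
  simp at hx; subst hx; exact e

lemma chain'_penult_last {R : V → V → Prop} : ∀ {l : List V} {x w : V},
    l.Chain' R → l.dropLast.getLast? = some x → l.getLast? = some w → R x w
  | [], _, _, _, hx, _ => by simp at hx
  | [_], _, _, _, hx, _ => by simp at hx
  | [a, b], x, w, h, hx, hw => by
      simp at hx hw
      subst hx; subst hw
      exact List.isChain_pair.mp h
  | a :: b :: c :: l, x, w, h, hx, hw => by
      refine chain'_penult_last (l := b :: c :: l) h.tail ?_ (by simpa using hw)
      have hne : (b :: c :: l).dropLast ≠ [] := by cases l <;> simp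
      have : (a :: b :: c :: l).dropLast.getLast? = ((b :: c :: l).dropLast).getLast? := by
        show (a :: (b :: c :: l).dropLast).getLast? = _
        rw [getLast?_cons_ne hne]
      rwa [this] at hx

end Paths

section Graph
variable {C : CID V}

/-- trivial d-connection: singleton path -/
lemma dconn_single (G : DAG V) (Z : Set V) (x : V) : G.DConn Z x x :=
  ⟨[x], by simp, trivial, rfl, rfl, trivial⟩

/-- trivial d-connection: a single edge -/
lemma dconn_pair {G : DAG V} {Z : Set V} {x y : V} (e : G.E x y ∨ G.E y x) (hxy : x ≠ y) :
    G.DConn Z x y :=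
  ⟨[x, y], by simp [hxy], ⟨e, trivial⟩, rfl, rfl, trivial⟩

variable (C)

/-- the requisite observations -/
def RRs : Set V := {O | C.Requisite O}
/-- the nonrequisite observations -/
def NNs : Set V := C.Pa \ RRs C
/-- the conditioning set `{D} ∪ R` -/
def Z0 : Set V := {C.dec} ∪ RRs C
/-- utility nodes that descend from the decision -/
def relU : Set V := {u | u ∈ C.util ∧ Relation.ReflTransGen C.E C.dec u}
/-- nodes d-connected (given `Z0`) to some nonrequisite observation -/
def ReachD : Set V := {w | w ∉ Z0 C ∧ ∃ O ∈ NNs C, C.toDAG.DConn (Z0 C) O w}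
/-- edges avoiding `Z0` on the target side -/
def Eav : V → V → Prop := fun x y => C.E x y ∧ y ∉ Z0 C

variable {C}

lemma pa_ne_dec {v : V} (hv : v ∈ C.Pa) : v ≠ C.dec := by
  intro h; subst h; exact no_self_edge C.toDAG hv

lemma RRs_sub_Pa : RRs C ⊆ C.Pa := fun _ h => h.1

lemma NN_not_Z0 {O : V} (hO : O ∈ NNs C) : O ∉ Z0 C := by
  rintro (h | h)
  · exact pa_ne_dec hO.1 h
  · exact hO.2 h

lemma Z0_cases {z : V} (hz : z ∈ Z0 C) : z = C.dec ∨ z ∈ C.Pa := by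
  rcases hz with h | h
  · exact Or.inl h
  · exact Or.inr (RRs_sub_Pa h)

lemma mem_NN_reach {O : V} (hO : O ∈ NNs C) : O ∈ ReachD C :=
  ⟨NN_not_Z0 hO, O, hO, dconn_single _ _ _⟩

lemma reach_of_mem_path {p : List V} {O v : V} (hnd : p.Nodup) (hu : C.toDAG.IsUPath p)
    (ha : C.toDAG.ActivePath (Z0 C) p) (hh : p.head? = some O) (hO : O ∈ NNs C)
    (hv : v ∈ p) (hvZ : v ∉ Z0 C) : v ∈ ReachD C := by
  obtain ⟨s, t, rfl⟩ := List.append_of_mem hv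
  have hps : s ++ v :: t = (s ++ [v]) ++ t := by simp
  rw [hps] at hnd hu ha hh
  refine ⟨hvZ, O, hO, (s ++ [v]), ?_, ?_, ?_, ?_, ?_⟩
  · exact (List.sublist_append_left _ _).nodup hnd
  · exact upath_prefix hu (by simp)
  · rw [← head?_append_left (p := s ++ [v]) (q := t) (by simp)]; exact hh
  · exact List.getLast?_concat
  · exact active_prefix ha

lemma reach_not_Z0 {w : V} (hw : w ∈ ReachD C) : w ∉ Z0 C := hw.1

lemma nodup_snoc {l : List V} {v : V} (h : l.Nodup) (hv : v ∉ l) : (l ++ [v]).Nodup := by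
  refine List.nodup_append.mpr ⟨h, by simp, ?_⟩
  intro a ha b hb
  simp only [List.mem_singleton] at hb
  subst hb
  exact fun h => hv (h ▸ ha)

/-- extension along an out-edge -/
lemma ext1 {w v : V} (hw : w ∈ ReachD C) (e : C.E w v) (hv : v ∉ Z0 C) : v ∈ ReachD C := by
  obtain ⟨hwZ, O, hO, p, hnd, hu, hh, hl, ha⟩ := hw
  by_cases hvp : v ∈ p
  · exact reach_of_mem_path hnd hu ha hh hO hvp hv
  have hpne : p ≠ [] := (isUPath_iff_chain'.mp hu).1
  refine ⟨hv, O, hO, p ++ [v], ?_, ?_, ?_, ?_, ?_⟩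
  · exact nodup_snoc hnd hvp
  · exact upath_snoc hu hl (Or.inl e)
  · rw [head?_append_left hpne]; exact hh
  · exact List.getLast?_concat
  · refine active_snoc ha hl ?_
    intro x _
    exact Or.inr ⟨fun hc => no_two_cycle C.toDAG e hc.2, hwZ⟩

/-- extension along an in-edge, when the endpoint has a descendant in `Z0` -/
lemma ext2 {w v : V} (hw : w ∈ ReachD C) (e : C.E v w) (hv : v ∉ Z0 C)
    (hdesc : ∃ z ∈ Z0 C, Relation.ReflTransGen C.E w z) : v ∈ ReachD C := by
  obtain ⟨hwZ, O, hO, p, hnd, hu, hh, hl, ha⟩ := hw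
  by_cases hvp : v ∈ p
  · exact reach_of_mem_path hnd hu ha hh hO hvp hv
  have hpne : p ≠ [] := (isUPath_iff_chain'.mp hu).1
  obtain ⟨z, hz, hrz⟩ := hdesc
  refine ⟨hv, O, hO, p ++ [v], ?_, ?_, ?_, ?_, ?_⟩
  · exact nodup_snoc hnd hvp
  · exact upath_snoc hu hl (Or.inr e)
  · rw [head?_append_left hpne]; exact hh
  · exact List.getLast?_concat
  · refine active_snoc ha hl ?_
    intro x _
    by_cases hxw : C.E x w
    · exact Or.inl ⟨hxw, e, z, hrz, hz⟩
    · exact Or.inr ⟨fun hc => hxw hc.1, hwZ⟩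

/-- extension to a co-parent through a common child in `Z0` -/
lemma ext_coparent {q c q' : V} (hq : q ∈ ReachD C) (e1 : C.E q c) (e2 : C.E q' c)
    (hcZ : c ∈ Z0 C) (hq' : q' ∉ Z0 C) : q' ∈ ReachD C := by
  obtain ⟨hqZ, O, hO, p, hnd, hu, hh, hl, ha⟩ := hq
  have hpne : p ≠ [] := (isUPath_iff_chain'.mp hu).1
  by_cases hq'p : q' ∈ p
  · exact reach_of_mem_path hnd hu ha hh hO hq'p hq'
  by_cases hcp : c ∈ p
  · -- `c` lies on the path; it must be entered by an edge from its predecessor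
    obtain ⟨s, t, rfl⟩ := List.append_of_mem hcp
    have hsne : s ≠ [] := by
      rintro rfl
      simp only [List.nil_append, List.head?_cons, Option.some.injEq] at hh
      exact NN_not_Z0 hO (hh ▸ hcZ)
    obtain ⟨s', x, rfl⟩ : ∃ s' x, s = s' ++ [x] := by
      rcases List.eq_nil_or_concat s with h | ⟨L, b, h⟩
      · exact absurd h hsne
      · exact ⟨L, b, by simpa using h⟩
    have htne : t ≠ [] := by
      rintro rfl
      have hcq : c = q := by
        have h' := hl
        rw [List.getLast?_append_of_ne_nil _ (by simp : ([c] : List V) ≠ [])] at h'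
        simpa using h'
      exact hqZ (hcq ▸ hcZ)
    obtain ⟨y, t', rfl⟩ : ∃ y t', t = y :: t' := by
      cases t with
      | nil => exact absurd rfl htne
      | cons y t' => exact ⟨y, t', rfl⟩
    have hdec : (s' ++ [x]) ++ c :: y :: t' = s' ++ x :: c :: y :: t' := by simp
    have htr : C.toDAG.ActiveTriple (Z0 C) x c y := active_triple_of_decomp ha hdec
    have hexc : C.toDAG.E x c := by
      rcases htr with ⟨h1, _, _⟩ | ⟨_, h2⟩
      · exact h1
      · exact absurd hcZ h2
    set pc : List V := (s' ++ [x]) ++ [c] with hpc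
    have hps : (s' ++ [x]) ++ c :: y :: t' = pc ++ (y :: t') := by simp [hpc]
    rw [hps] at hnd hu ha hh
    have hcnd : pc.Nodup := (List.sublist_append_left _ _).nodup hnd
    have hcu : C.toDAG.IsUPath pc := upath_prefix hu (by simp [hpc])
    have hca : C.toDAG.ActivePath (Z0 C) pc := active_prefix ha
    have hch : pc.head? = some O := by
      rw [← head?_append_left (p := pc) (q := y :: t') (by simp [hpc])]; exact hh
    have hcl : pc.getLast? = some c := List.getLast?_concat
    have hq'pc : q' ∉ pc := by
      intro h
      have hmem : q' ∈ (s' ++ [x]) ++ c :: y :: t' := by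
        rw [hps]; exact List.mem_append.mpr (Or.inl h)
      exact hq'p hmem
    refine ⟨hq', O, hO, pc ++ [q'], nodup_snoc hcnd hq'pc, upath_snoc hcu hcl (Or.inr e2), ?_,
      List.getLast?_concat, ?_⟩
    · rw [head?_append_left (by simp [hpc] : pc ≠ [])]; exact hch
    · refine active_snoc hca hcl ?_
      intro x₀ hx₀
      have : x₀ = x := by
        rw [hpc, List.dropLast_concat, List.getLast?_concat] at hx₀
        exact (Option.some_inj.mp hx₀).symm
      subst this
      exact Or.inl ⟨hexc, e2, c, Relation.ReflTransGen.refl, hcZ⟩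
  · -- `c` not on the path: extend by two steps `q → c ← q'`
    have hcq' : c ≠ q' := fun h => hq' (h ▸ hcZ)
    have h1nd : (p ++ [c]).Nodup := nodup_snoc hnd hcp
    have h1u : C.toDAG.IsUPath (p ++ [c]) := upath_snoc hu hl (Or.inl e1)
    have h1a : C.toDAG.ActivePath (Z0 C) (p ++ [c]) := by
      refine active_snoc ha hl ?_
      intro x _
      exact Or.inr ⟨fun hcc => no_two_cycle C.toDAG e1 hcc.2, hqZ⟩
    have hq'1 : q' ∉ p ++ [c] := by
      intro h
      rcases List.mem_append.mp h with h' | h'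
      · exact hq'p h'
      · have hqc : q' = c := by simpa using h'
        exact hcq' hqc.symm
    refine ⟨hq', O, hO, (p ++ [c]) ++ [q'], nodup_snoc h1nd hq'1,
      upath_snoc h1u (List.getLast?_concat) (Or.inr e2), ?_, List.getLast?_concat, ?_⟩
    · rw [head?_append_left (by simp : p ++ [c] ≠ []), head?_append_left hpne]; exact hh
    · refine active_snoc h1a (List.getLast?_concat) ?_
      intro x hx
      have hxq : x = q := by
        rw [List.dropLast_concat] at hx
        rw [hl] at hx; exact (Option.some_inj.mp hx).symm
      subst hxq
      exact Or.inl ⟨e1, e2, c, Relation.ReflTransGen.refl, hcZ⟩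

end Graph

section Graph2
variable {C : CID V}

lemma ext_nnchild {c q' : V} (hc : c ∈ NNs C) (e : C.E q' c) (hq' : q' ∉ Z0 C) :
    q' ∈ ReachD C := by
  have hne : c ≠ q' := fun h => no_self_edge C.toDAG (h ▸ e)
  exact ⟨hq', c, hc, dconn_pair (Or.inr e) hne⟩

lemma chain'_suffix {R : V → V → Prop} {l₁ l₂ : List V} (h : List.Chain' R (l₁ ++ l₂)) :
    List.Chain' R l₂ := (List.isChain_append.mp h).2.1

lemma dir_nodup {c t : V} (h : Relation.ReflTransGen (Eav C) c t) :
    ∃ l : List V, l ≠ [] ∧ l.Nodup ∧ l.Chain' (fun x y => C.E x y) ∧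
      (∀ x ∈ l, x = c ∨ x ∉ Z0 C) ∧ l.head? = some c ∧ l.getLast? = some t := by
  induction h using Relation.ReflTransGen.head_induction_on with
  | refl => exact ⟨[t], by simp, by simp, by simp [List.Chain'], by simp, rfl, rfl⟩
  | head e' h' ih =>
    rename_i a b
    obtain ⟨l, lne, lnd, lch, lZ, lh, ll⟩ := ih
    have lZ' : ∀ x ∈ l, x ∉ Z0 C := fun x hx => (lZ x hx).elim (fun h => h ▸ e'.2) id
    by_cases hx : a ∈ l
    · obtain ⟨s, t₂, rfl⟩ := List.append_of_mem hx
      refine ⟨a :: t₂, by simp, (List.sublist_append_right s _).nodup lnd,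
        chain'_suffix lch, fun x hxx => Or.inr (lZ' x (List.mem_append.mpr (Or.inr hxx))), rfl, ?_⟩
      rw [← ll, List.getLast?_append_of_ne_nil _ (by simp : (a :: t₂ : List V) ≠ [])]
    · refine ⟨a :: l, by simp, by simp [lnd, hx], ?_,
        fun x hxx => by
          rcases List.mem_cons.mp hxx with h | h
          · exact Or.inl h
          · exact Or.inr (lZ' x h), rfl, (getLast?_cons_ne lne a).trans ll⟩
      refine List.isChain_cons.mpr ⟨?_, lch⟩
      intro y hy
      rw [lh] at hy
      simp at hy
      subst hy
      exact e'.1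

lemma active_updir {l : List V} (hch : l.Chain' (fun x y => C.E y x))
    (hZ : ∀ x ∈ l, x ∉ Z0 C) : C.toDAG.ActivePath (Z0 C) l := by
  refine active_of_triples ?_
  rintro l₁ x y z l₂ rfl
  have h3 : List.Chain' (fun x y => C.E y x) (x :: y :: z :: l₂) := chain'_suffix hch
  have exy : C.E y x := (List.isChain_cons_cons.mp h3).1
  refine Or.inr ⟨fun hc => no_two_cycle C.toDAG exy hc.1, hZ y (by simp)⟩

/-- new-source lemma: a directed `Z0`-avoiding path down to a nonrequisite observation
makes every parent of its start reachable -/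
lemma src_lemma {c t q' : V} (hchain : Relation.ReflTransGen (Eav C) c t) (ht : t ∈ NNs C)
    (hc : c ∉ Z0 C) (e : C.E q' c) (hq' : q' ∉ Z0 C) : q' ∈ ReachD C := by
  obtain ⟨l, lne, lnd, lch, lZ, lh, ll⟩ := dir_nodup hchain
  have lZ' : ∀ x ∈ l, x ∉ Z0 C := fun x hx => (lZ x hx).elim (fun h => h ▸ hc) id
  have Pnd : l.reverse.Nodup := List.nodup_reverse.mpr lnd
  have Pne : l.reverse ≠ [] := by simpa using lne
  have Pch : l.reverse.Chain' (fun x y => C.E y x) := by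
    rw [List.Chain', List.isChain_reverse]
    exact lch
  have Pu : C.toDAG.IsUPath l.reverse :=
    isUPath_iff_chain'.mpr ⟨Pne, Pch.imp (fun a b h => Or.inr h)⟩
  have PZ : ∀ x ∈ l.reverse, x ∉ Z0 C := fun x hx => lZ' x (List.mem_reverse.mp hx)
  have Pa : C.toDAG.ActivePath (Z0 C) l.reverse := active_updir Pch PZ
  have Ph : l.reverse.head? = some t := by rw [List.head?_reverse]; exact ll
  have Pl : l.reverse.getLast? = some c := by rw [List.getLast?_reverse]; exact lh
  by_cases hq'P : q' ∈ l.reverse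
  · exact reach_of_mem_path Pnd Pu Pa Ph ht hq'P hq'
  refine ⟨hq', t, ht, l.reverse ++ [q'], nodup_snoc Pnd hq'P, upath_snoc Pu Pl (Or.inr e), ?_,
    List.getLast?_concat, ?_⟩
  · rw [head?_append_left Pne]; exact Ph
  · refine active_snoc Pa Pl ?_
    intro x hx
    have hcx : C.E c x := chain'_penult_last (R := fun x y => C.E y x) Pch hx Pl
    exact Or.inr ⟨fun hcc => no_two_cycle C.toDAG hcx hcc.1, hc⟩

lemma Z0_sub_ZO {O : V} (hO : O ∈ NNs C) : Z0 C ⊆ {C.dec} ∪ (C.Pa \ {O}) := by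
  rintro z (hz | hz)
  · exact Or.inl hz
  · refine Or.inr ⟨RRs_sub_Pa hz, ?_⟩
    intro h
    rw [Set.mem_singleton_iff] at h
    exact hO.2 (h ▸ hz)

lemma mid_mem_tail {p l₁ l₂ : List V} {x y z : V} (h : p = l₁ ++ x :: y :: z :: l₂) :
    y ∈ p.tail := by
  subst h
  cases l₁ with
  | nil => simp
  | cons a l₁' => simp

lemma lemG_aux : ∀ n (p : List V), p.length ≤ n → p.Nodup → C.toDAG.IsUPath p →
    C.toDAG.ActivePath (Z0 C) p → ∀ O u, p.head? = some O → O ∈ NNs C →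
    p.getLast? = some u → u ∈ relU C → False := by
  intro n
  induction n with
  | zero =>
    intro p hp _ hu _ _ _ _ _ _ _
    have : p = [] := List.eq_nil_of_length_eq_zero (Nat.le_zero.mp hp)
    subst this
    exact (isUPath_iff_chain'.mp hu).1 rfl
  | succ n ih =>
    intro p hlen hnd hu ha O u hh hO hl hrel
    by_cases hNN : ∃ w ∈ p.tail, w ∈ NNs C
    · obtain ⟨w, hwt, hwN⟩ := hNN
      obtain ⟨pt, rfl⟩ : ∃ pt, p = O :: pt := by
        cases p with
        | nil => simp at hh
        | cons a pt =>
            have haO : a = O := by simpa using hh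
            exact ⟨pt, by rw [haO]⟩
      simp only [List.tail_cons] at hwt
      obtain ⟨s, t₂, rfl⟩ := List.append_of_mem hwt
      have hdec : O :: (s ++ w :: t₂) = (O :: s) ++ (w :: t₂) := by simp
      rw [hdec] at hnd hu ha hl hlen
      refine ih (w :: t₂) ?_ ((List.sublist_append_right _ _).nodup hnd)
        (upath_suffix hu (by simp)) (active_suffix _ ha) w u rfl hwN ?_ hrel
      · have : ((O :: s) ++ (w :: t₂)).length = s.length + t₂.length + 2 := by
          simp [List.length_append]; omega
        rw [this] at hlen
        simp only [List.length_cons]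
        omega
      · rw [← hl, List.getLast?_append_of_ne_nil _ (by simp : (w :: t₂ : List V) ≠ [])]
    · push_neg at hNN
      refine hO.2 ⟨hO.1, u, hrel.1, hrel.2, p, hnd, hu, hh, hl, ?_⟩
      refine active_of_triples ?_
      intro l₁ x y z l₂ hdec
      have htr := active_triple_of_decomp ha hdec
      rcases htr with ⟨h1, h2, w', hw1, hw2⟩ | ⟨h1, h2⟩
      · exact Or.inl ⟨h1, h2, w', hw1, Z0_sub_ZO hO hw2⟩
      · refine Or.inr ⟨h1, ?_⟩
        rintro (hy | hy)
        · exact h2 (Or.inl hy)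
        · by_cases h : y ∈ RRs C
          · exact h2 (Or.inr h)
          · exact hNN y (mid_mem_tail hdec) ⟨hy.1, h⟩

/-- Lemma G: no utility node descending from the decision is reachable from a
nonrequisite observation given `Z0`. -/
lemma lemG {u : V} (hu : u ∈ relU C) (hr : u ∈ ReachD C) : False := by
  obtain ⟨_, O, hO, p, hnd, hup, hh, hl, ha⟩ := hr
  exact lemG_aux p.length p le_rfl hnd hup ha O u hh hO hl hu

lemma avoid_or {v t : V} (h : Relation.ReflTransGen C.E v t) :
    Relation.ReflTransGen (Eav C) v t ∨ ∃ z ∈ Z0 C, Relation.ReflTransGen C.E v z := by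
  induction h using Relation.ReflTransGen.head_induction_on with
  | refl => exact Or.inl Relation.ReflTransGen.refl
  | head e h' ih =>
    rename_i a b
    by_cases hb : b ∈ Z0 C
    · exact Or.inr ⟨b, hb, Relation.ReflTransGen.single e⟩
    · rcases ih with h1 | ⟨z, hz, hrz⟩
      · exact Or.inl (Relation.ReflTransGen.head ⟨e, hb⟩ h1)
      · exact Or.inr ⟨z, hz, Relation.ReflTransGen.head e hrz⟩

lemma reach_of_eav_chain {w x : V} (hw : w ∈ ReachD C) (h : Relation.ReflTransGen (Eav C) w x) :
    x ∈ ReachD C := by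
  induction h with
  | refl => exact hw
  | tail h' e ih => exact ext1 ih e.1 e.2

lemma lemG2 {w u : V} (hw : w ∈ ReachD C) (h : Relation.ReflTransGen (Eav C) w u)
    (hu : u ∈ relU C) : False :=
  lemG hu (reach_of_eav_chain hw h)

end Graph2

section Graph3
variable {C : CID V}

/-- the fixed (conditioned) nodes: decision and its parents -/
def FixS (C : CID V) : Set V := insert C.dec C.Pa
/-- reflexive ancestors of the fixed nodes and the relevant utilities -/
def W1 (C : CID V) : Set V :=
  {v | ∃ t, (t ∈ FixS C ∨ t ∈ relU C) ∧ Relation.ReflTransGen C.E v t}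

lemma Z0_sub_Fix : Z0 C ⊆ FixS C := by
  rintro z (hz | hz)
  · exact Or.inl hz
  · exact Or.inr (RRs_sub_Pa hz)

lemma Fix_sub_W1 : FixS C ⊆ W1 C := fun v hv => ⟨v, Or.inl hv, Relation.ReflTransGen.refl⟩

lemma relU_sub_W1 : relU C ⊆ W1 C := fun v hv => ⟨v, Or.inr hv, Relation.ReflTransGen.refl⟩

lemma W1_parent_closed {q v : V} (e : C.E q v) (hv : v ∈ W1 C) : q ∈ W1 C := by
  obtain ⟨t, ht, hrt⟩ := hv
  exact ⟨t, ht, Relation.ReflTransGen.head e hrt⟩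

lemma relU_not_Fix {u : V} (hu : u ∈ relU C) : u ∉ FixS C := by
  rintro (h | h)
  · exact C.dec_not_util (h ▸ hu.1)
  · exact no_rtg_cycle C.toDAG hu.2 h

lemma NN_sub_Fix : NNs C ⊆ FixS C := fun v hv => Or.inr hv.1

lemma closure_parent {v q : V} (hv : v ∈ ReachD C) (hvW : v ∈ W1 C) (e : C.E q v)
    (hq : q ∉ Z0 C) : q ∈ ReachD C := by
  by_cases hz : ∃ z ∈ Z0 C, Relation.ReflTransGen C.E v z
  · exact ext2 hv e hq hz
  obtain ⟨t, ht, hrt⟩ := hvW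
  rcases ht with ht | ht
  · rcases (Set.mem_insert_iff.mp ht) with rfl | hPa
    · exact absurd ⟨C.dec, Or.inl rfl, hrt⟩ hz
    · by_cases hR : t ∈ RRs C
      · exact absurd ⟨t, Or.inr hR, hrt⟩ hz
      · rcases avoid_or hrt with hav | hcon
        · exact src_lemma hav ⟨hPa, hR⟩ (reach_not_Z0 hv) e hq
        · exact absurd hcon hz
  · rcases avoid_or hrt with hav | hcon
    · exact (lemG2 hv hav ht).elim
    · exact absurd hcon hz

lemma closure_coparent {q c q' : V} (hq : q ∈ ReachD C) (e1 : C.E q c) (e2 : C.E q' c)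
    (hcW : c ∈ W1 C) (hq' : q' ∉ Z0 C) : q' ∈ ReachD C := by
  by_cases hcZ : c ∈ Z0 C
  · exact ext_coparent hq e1 e2 hcZ hq'
  · exact closure_parent (ext1 hq e1 hcZ) hcW e2 hq'

/-- The key structural property of side-A (reachable-side) factors:
all their variables outside `FixS` are reachable, and the decision is not among
their variables. -/
lemma Aside_vars {v : V} (hvW : v ∈ W1 C) (hvD : v ≠ C.dec)
    (hA : v ∈ ReachD C ∨ ∃ q, C.E q v ∧ q ∈ ReachD C) :
    (∀ x, (x = v ∨ C.E x v) → x ∉ FixS C → x ∈ ReachD C) ∧ ¬ C.E C.dec v := by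
  have hvdich : v ∈ ReachD C ∨ v ∈ FixS C := by
    rcases hA with h | ⟨q, e, hqR⟩
    · exact Or.inl h
    · by_cases hvF : v ∈ FixS C
      · exact Or.inr hvF
      · exact Or.inl (ext1 hqR e (fun h => hvF (Z0_sub_Fix h)))
  constructor
  · intro x hx hxF
    have hxZ : x ∉ Z0 C := fun h => hxF (Z0_sub_Fix h)
    rcases hx with rfl | ex
    · rcases hvdich with h | h
      · exact h
      · exact absurd h hxF
    · rcases hvdich with h | h
      · exact closure_parent h hvW ex hxZ
      · rcases hA with h' | ⟨q, e, hqR⟩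
        · exact closure_parent h' hvW ex hxZ
        · exact closure_coparent hqR e ex hvW hxZ
  · intro eDv
    have hvR : v ∈ ReachD C := by
      rcases hvdich with h | h
      · exact h
      · rcases (Set.mem_insert_iff.mp h) with rfl | hPa
        · exact absurd rfl hvD
        · exact (no_two_cycle C.toDAG eDv hPa).elim
    obtain ⟨t, ht, hrt⟩ := hvW
    rcases ht with ht | ht
    · rcases (Set.mem_insert_iff.mp ht) with rfl | hPa
      · exact no_rtg_cycle C.toDAG hrt eDv
      · exact no_rtg_cycle C.toDAG (Relation.ReflTransGen.head eDv hrt) hPa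
    · rcases avoid_or hrt with hav | ⟨z, hz, hrz⟩
      · exact lemG2 hvR hav ht
      · rcases Z0_cases hz with rfl | hPa
        · exact no_rtg_cycle C.toDAG hrz eDv
        · exact no_rtg_cycle C.toDAG (Relation.ReflTransGen.head eDv hrz) hPa

lemma relU_not_reach {u : V} (hu : u ∈ relU C) : u ∉ ReachD C := fun h => lemG hu h

end Graph3

section Analytic
variable [Fintype V] [DecidableEq V]

lemma exists_sink (G : DAG V) (S : Finset V) (hS : S.Nonempty) :
    ∃ v ∈ S, ∀ w ∈ S, ¬ G.E v w := by
  by_contra hcon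
  push_neg at hcon
  obtain ⟨x₀, hx₀⟩ := hS
  choose f hfS hfE using hcon
  let F : {x // x ∈ S} → {x // x ∈ S} := fun x => ⟨f x x.2, hfS x x.2⟩
  have hFE : ∀ x : {x // x ∈ S}, G.E x.1 (F x).1 := fun x => hfE x x.2
  have key : ∀ (k : ℕ) (x : {x // x ∈ S}), Relation.TransGen G.E x.1 (F^[k+1] x).1 := by
    intro k
    induction k with
    | zero => exact fun x => Relation.TransGen.single (hFE x)
    | succ k ih =>
      intro x
      rw [Function.iterate_succ_apply']
      exact (ih x).tail (hFE _)
  have hni : ¬ Function.Injective (fun n : Fin (Fintype.card {x // x ∈ S} + 1) =>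
      F^[n.1] ⟨x₀, hx₀⟩) := by
    intro hinj
    have := Fintype.card_le_of_injective _ hinj
    simp at this
  obtain ⟨i, j, hij, hne⟩ := Function.not_injective_iff.mp hni
  wlog hlt : i.1 < j.1 generalizing i j
  · have hne' : i.1 ≠ j.1 := fun h => hne (Fin.ext h)
    exact this j i hij.symm (Ne.symm hne) (by omega)
  have hiter : F^[j.1 - i.1] (F^[i.1] ⟨x₀, hx₀⟩) = F^[i.1] ⟨x₀, hx₀⟩ := by
    rw [← Function.iterate_add_apply]
    have : j.1 - i.1 + i.1 = j.1 := by omega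
    rw [this, hij]
  have hpos : j.1 - i.1 - 1 + 1 = j.1 - i.1 := by omega
  have := key (j.1 - i.1 - 1) (F^[i.1] ⟨x₀, hx₀⟩)
  rw [hpos, hiter] at this
  exact G.acyclic _ this

variable {C : CID V} {val : V → Type} [∀ v, Fintype (val v)]

lemma sum_involutive {α : Type*} [Fintype α] (f : α → ℝ) (e : α → α)
    (he : Function.Involutive e) : ∑ x, f (e x) = ∑ x, f x :=
  Equiv.sum_comp (Function.Involutive.toPerm e he) f

lemma sum_update_sum (v₀ : V) (F : (∀ v, val v) → ℝ) :
    ∑ g : ∀ v, val v, ∑ y : val v₀, F (Function.update g v₀ y) =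
      (Fintype.card (val v₀) : ℝ) * ∑ g : ∀ v, val v, F g := by
  have h1 : ∑ g : ∀ v, val v, ∑ y : val v₀, F (Function.update g v₀ y)
      = ∑ p : (∀ v, val v) × val v₀, F (Function.update p.1 v₀ p.2) := by
    rw [Fintype.sum_prod_type]
  have he : Function.Involutive (fun p : (∀ v, val v) × val v₀ =>
      (Function.update p.1 v₀ p.2, p.1 v₀)) := by
    rintro ⟨g, y⟩
    simp [Function.update_idem]
  have h2 : ∑ p : (∀ v, val v) × val v₀, F (Function.update p.1 v₀ p.2)
      = ∑ p : (∀ v, val v) × val v₀, F p.1 := by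
    rw [← sum_involutive (fun p : (∀ v, val v) × val v₀ => F p.1) _ he]
  rw [h1, h2, Fintype.sum_prod_type]
  have hc : ∀ g : ∀ v, val v, ∑ _y : val v₀, F g = (Fintype.card (val v₀) : ℝ) * F g := by
    intro g
    rw [Finset.sum_const]
    simp [mul_comm]
  rw [Finset.sum_congr rfl (fun g _ => hc g), ← Finset.mul_sum]

lemma sumout (P : C.Param val) (hne : ∀ v, Nonempty (val v)) :
    ∀ (S : Finset V), C.dec ∉ S → ∀ b : ∀ v, val v,
      ∑ g : ∀ v, val v, ∏ v ∈ S, P.cpt v (fun w => if w ∈ S then g w else b w) =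
        ∏ v ∈ Sᶜ, (Fintype.card (val v) : ℝ) := by
  intro S
  induction S using Finset.strongInduction with
  | _ S ih =>
    intro hD b
    rcases S.eq_empty_or_nonempty with rfl | hS
    · rw [Finset.compl_empty]
      simp [Fintype.card_pi, Nat.cast_prod]
    · obtain ⟨v₀, hv₀S, hv₀sink⟩ := exists_sink C.toDAG S hS
      have hv₀D : v₀ ≠ C.dec := fun h => hD (h ▸ hv₀S)
      set S' := S.erase v₀ with hS'
      have hDS' : C.dec ∉ S' := fun h => hD (Finset.mem_of_mem_erase h)
      -- the merged assignment splits off coordinate v₀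
      have hmerge : ∀ g : ∀ v, val v,
          (fun w => if w ∈ S then g w else b w) =
          Function.update (fun w => if w ∈ S' then g w else b w) v₀ (g v₀) := by
        intro g
        funext w
        by_cases hw : w = v₀
        · subst hw
          simp [hv₀S]
        · rw [Function.update_of_ne hw]
          have : w ∈ S ↔ w ∈ S' := by
            rw [hS', Finset.mem_erase]
            exact ⟨fun h => ⟨hw, h⟩, fun h => h.2⟩
          simp only [this]
      have hloc : ∀ g : ∀ v, val v, ∀ v ∈ S', ∀ y : val v₀,
          P.cpt v (Function.update (fun w => if w ∈ S' then g w else b w) v₀ y) =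
          P.cpt v (fun w => if w ∈ S' then g w else b w) := by
        intro g v hv y
        have hvD : v ≠ C.dec := fun h => hDS' (h ▸ hv)
        have hvv₀ : v ≠ v₀ := fun h => (Finset.mem_erase.mp hv).1 h
        refine P.cpt_local v hvD _ _ (Function.update_of_ne hvv₀ _ _) ?_
        intro u hu
        by_cases huv : u = v₀
        · exact absurd (huv ▸ hu) (hv₀sink v (Finset.mem_of_mem_erase hv))
        · exact Function.update_of_ne huv _ _
      have hsplit : ∀ g : ∀ v, val v,
          ∏ v ∈ S, P.cpt v (fun w => if w ∈ S then g w else b w) =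
          P.cpt v₀ (Function.update (fun w => if w ∈ S' then g w else b w) v₀ (g v₀)) *
            ∏ v ∈ S', P.cpt v (fun w => if w ∈ S' then g w else b w) := by
        intro g
        rw [← Finset.mul_prod_erase S _ hv₀S, ← hS']
        congr 1
        · rw [hmerge g]
        · refine Finset.prod_congr rfl ?_
          intro v hv
          rw [hmerge g, hloc g v hv]
      have hM : ∀ (g : ∀ v, val v) (y : val v₀),
          (fun w => if w ∈ S' then (Function.update g v₀ y) w else b w) =
          (fun w => if w ∈ S' then g w else b w) := by
        intro g y
        funext w
        by_cases hw : w ∈ S'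
        · have hwv₀ : w ≠ v₀ := (Finset.mem_erase.mp hw).1
          simp [hw, Function.update_of_ne hwv₀]
        · simp [hw]
      set G : (∀ v, val v) → ℝ := fun g =>
        P.cpt v₀ (Function.update (fun w => if w ∈ S' then g w else b w) v₀ (g v₀)) *
          ∏ v ∈ S', P.cpt v (fun w => if w ∈ S' then g w else b w) with hG
      have hupd : ∀ (g : ∀ v, val v) (y : val v₀),
          G (Function.update g v₀ y) =
          P.cpt v₀ (Function.update (fun w => if w ∈ S' then g w else b w) v₀ y) *
            ∏ v ∈ S', P.cpt v (fun w => if w ∈ S' then g w else b w) := by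
        intro g y
        rw [hG]
        simp only
        rw [hM g y, Function.update_self]
      have hkey : (Fintype.card (val v₀) : ℝ) * ∑ g : ∀ v, val v, G g =
          ∑ g : ∀ v, val v, ∏ v ∈ S', P.cpt v (fun w => if w ∈ S' then g w else b w) := by
        rw [← sum_update_sum v₀ G]
        refine Finset.sum_congr rfl ?_
        intro g _
        rw [Finset.sum_congr rfl (fun y _ => hupd g y), ← Finset.sum_mul]
        rw [P.cpt_sum v₀ hv₀D, one_mul]
      have hIH := ih S' (Finset.erase_ssubset hv₀S) hDS' b
      have hLHS : ∑ g : ∀ v, val v, ∏ v ∈ S, P.cpt v (fun w => if w ∈ S then g w else b w)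
          = ∑ g : ∀ v, val v, G g :=
        Finset.sum_congr rfl (fun g _ => hsplit g)
      have hcard0 : (Fintype.card (val v₀) : ℝ) ≠ 0 := by
        have := Fintype.card_pos_iff.mpr (hne v₀)
        positivity
      have hcompl : ∏ v ∈ S'ᶜ, (Fintype.card (val v) : ℝ) =
          (Fintype.card (val v₀) : ℝ) * ∏ v ∈ Sᶜ, (Fintype.card (val v) : ℝ) := by
        have : S'ᶜ = insert v₀ Sᶜ := by
          rw [hS', Finset.compl_erase]
        rw [this, Finset.prod_insert (by simp [hv₀S])]
      apply mul_left_cancel₀ hcard0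
      rw [hLHS] at *
      rw [hkey, hIH, hcompl]

end Analytic

section Analytic2
variable [Fintype V] [DecidableEq V] {C : CID V} {val : V → Type} [∀ v, Fintype (val v)]

/-- merge: take values from `a` on `K` and from `g` elsewhere -/
def mOut (K : Set V) (a g : ∀ v, val v) : ∀ v, val v := fun v => if v ∈ K then a v else g v

lemma mOut_mem {K : Set V} {a g : ∀ v, val v} {v : V} (h : v ∈ K) : mOut K a g v = a v :=
  if_pos h

lemma mOut_not_mem {K : Set V} {a g : ∀ v, val v} {v : V} (h : v ∉ K) : mOut K a g v = g v :=
  if_neg h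

lemma sum_merge (K : Set V) (F : (∀ v, val v) → ℝ) :
    ∑ p : (∀ v, val v) × (∀ v, val v), F (mOut K p.1 p.2) =
      (Fintype.card (∀ v, val v) : ℝ) * ∑ a, F a := by
  have he : Function.Involutive (fun p : (∀ v, val v) × (∀ v, val v) =>
      (mOut K p.1 p.2, mOut K p.2 p.1)) := by
    rintro ⟨a, g⟩
    have h1 : mOut K (mOut K a g) (mOut K g a) = a := by
      funext v
      by_cases hv : v ∈ K <;> simp [mOut, hv]
    have h2 : mOut K (mOut K g a) (mOut K a g) = g := by
      funext v
      by_cases hv : v ∈ K <;> simp [mOut, hv]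
    simp only [Prod.mk.injEq]
    exact ⟨h1, h2⟩
  have h1 : ∑ p : (∀ v, val v) × (∀ v, val v),
      (fun q : (∀ v, val v) × (∀ v, val v) => F (mOut K q.1 q.2))
        ((fun p : (∀ v, val v) × (∀ v, val v) => (mOut K p.1 p.2, mOut K p.2 p.1)) p) =
      ∑ p : (∀ v, val v) × (∀ v, val v), F p.1 := by
    refine Finset.sum_congr rfl ?_
    rintro ⟨a, g⟩ _
    simp only
    congr 1
    funext v
    by_cases hv : v ∈ K <;> simp [mOut, hv]
  rw [← sum_involutive _ _ he, h1, Fintype.sum_prod_type]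
  simp [Finset.sum_const, mul_comm, ← Finset.sum_mul]

/-- eliminating a self-contained block of factors over variables `S` -/
lemma elim_factors (P : C.Param val) (hne : ∀ v, Nonempty (val v)) (K : Set V) (a : ∀ v, val v)
    (S : Finset V) (hD : C.dec ∉ S) (hSK : ∀ v ∈ S, v ∉ K)
    (f : (∀ v, val v) → ℝ) (hf : ∀ g h, (∀ v, v ∉ S → g v = h v) → f g = f h) :
    (Fintype.card (∀ v, val v) : ℝ) * ∑ g, f g * ∏ v ∈ S, P.cpt v (mOut K a g) =
      (∏ v ∈ Sᶜ, (Fintype.card (val v) : ℝ)) * ∑ g, f g := by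
  classical
  set mIn : (∀ v, val v) → (∀ v, val v) → (∀ v, val v) :=
    fun h g => (fun w => if w ∈ S then h w else g w) with hmIn
  have he : Function.Involutive (fun p : (∀ v, val v) × (∀ v, val v) =>
      (mIn p.2 p.1, mIn p.1 p.2)) := by
    rintro ⟨g, h⟩
    have h1 : mIn (mIn g h) (mIn h g) = g := by
      funext w
      by_cases hw : w ∈ S <;> simp [hmIn, hw]
    have h2 : mIn (mIn h g) (mIn g h) = h := by
      funext w
      by_cases hw : w ∈ S <;> simp [hmIn, hw]
    simp only [Prod.mk.injEq]
    exact ⟨h1, h2⟩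
  set T : (∀ v, val v) × (∀ v, val v) → ℝ :=
    fun p => f p.1 * ∏ v ∈ S, P.cpt v (mIn p.2 (mOut K a p.1)) with hT
  have eval1 : ∑ p : (∀ v, val v) × (∀ v, val v), T p =
      (∏ v ∈ Sᶜ, (Fintype.card (val v) : ℝ)) * ∑ g, f g := by
    rw [Fintype.sum_prod_type]
    have : ∀ g : ∀ v, val v,
        ∑ h : ∀ v, val v, T (g, h) = f g * ∏ v ∈ Sᶜ, (Fintype.card (val v) : ℝ) := by
      intro g
      rw [hT]
      simp only
      rw [← Finset.mul_sum]
      congr 1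
      exact sumout P hne S hD (mOut K a g)
    rw [Finset.sum_congr rfl (fun g _ => this g), ← Finset.sum_mul]
    ring
  have eval2 : ∑ p : (∀ v, val v) × (∀ v, val v), T p =
      (Fintype.card (∀ v, val v) : ℝ) * ∑ g, f g * ∏ v ∈ S, P.cpt v (mOut K a g) := by
    have h1 : ∑ p : (∀ v, val v) × (∀ v, val v),
        T ((fun p : (∀ v, val v) × (∀ v, val v) => (mIn p.2 p.1, mIn p.1 p.2)) p) =
        ∑ p : (∀ v, val v) × (∀ v, val v),
          f p.1 * ∏ v ∈ S, P.cpt v (mOut K a p.1) := by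
      refine Finset.sum_congr rfl ?_
      rintro ⟨g, h⟩ _
      rw [hT]
      simp only
      congr 1
      · refine hf _ _ ?_
        intro v hv
        simp [hmIn, hv]
      · have harg : mIn (mIn g h) (mOut K a (mIn h g)) = mOut K a g := by
          funext w
          by_cases hw : w ∈ S
          · have hwK : w ∉ K := hSK w hw
            simp [hmIn, hw, mOut, hwK]
          · by_cases hwK : w ∈ K <;> simp [hmIn, hw, mOut, hwK]
        rw [harg]
    rw [← sum_involutive _ _ he, h1, Fintype.sum_prod_type]
    have : ∀ g : ∀ v, val v,
        ∑ _h : ∀ v, val v, f g * ∏ v ∈ S, P.cpt v (mOut K a g) =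
        (Fintype.card (∀ v, val v) : ℝ) * (f g * ∏ v ∈ S, P.cpt v (mOut K a g)) := by
      intro g
      rw [Finset.sum_const]
      simp [mul_comm]
    rw [Finset.sum_congr rfl (fun g _ => this g), ← Finset.mul_sum]
  rw [← eval2, eval1]

/-- splitting a sum of a product of functions with disjoint dependencies -/
lemma split_factors (T₁ : Set V) (f₁ f₂ : (∀ v, val v) → ℝ)
    (hf₁ : ∀ g h : ∀ v, val v, (∀ v ∈ T₁, g v = h v) → f₁ g = f₁ h)
    (hf₂ : ∀ g h : ∀ v, val v, (∀ v, v ∉ T₁ → g v = h v) → f₂ g = f₂ h) :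
    (Fintype.card (∀ v, val v) : ℝ) * ∑ g, f₁ g * f₂ g = (∑ g, f₁ g) * (∑ g, f₂ g) := by
  have he : Function.Involutive (fun p : (∀ v, val v) × (∀ v, val v) =>
      (mOut T₁ p.1 p.2, mOut T₁ p.2 p.1)) := by
    rintro ⟨a, g⟩
    have h1 : mOut T₁ (mOut T₁ a g) (mOut T₁ g a) = a := by
      funext v
      by_cases hv : v ∈ T₁ <;> simp [mOut, hv]
    have h2 : mOut T₁ (mOut T₁ g a) (mOut T₁ a g) = g := by
      funext v
      by_cases hv : v ∈ T₁ <;> simp [mOut, hv]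
    simp only [Prod.mk.injEq]
    exact ⟨h1, h2⟩
  set T : (∀ v, val v) × (∀ v, val v) → ℝ := fun p => f₁ p.1 * f₂ p.2 with hT
  have eval1 : ∑ p : (∀ v, val v) × (∀ v, val v), T p = (∑ g, f₁ g) * (∑ g, f₂ g) := by
    rw [hT, Fintype.sum_prod_type, ← Finset.sum_mul_sum]
  have h1 : ∑ p : (∀ v, val v) × (∀ v, val v),
      T ((fun p : (∀ v, val v) × (∀ v, val v) => (mOut T₁ p.1 p.2, mOut T₁ p.2 p.1)) p) =
      ∑ p : (∀ v, val v) × (∀ v, val v), f₁ p.1 * f₂ p.1 := by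
    refine Finset.sum_congr rfl ?_
    rintro ⟨g, h⟩ _
    rw [hT]
    simp only
    congr 1
    · exact hf₁ _ _ (fun v hv => mOut_mem hv)
    · exact hf₂ _ _ (fun v hv => mOut_not_mem hv)
  have eval2 : ∑ p : (∀ v, val v) × (∀ v, val v), T p =
      (Fintype.card (∀ v, val v) : ℝ) * ∑ g, f₁ g * f₂ g := by
    rw [← sum_involutive _ _ he, h1, Fintype.sum_prod_type]
    have : ∀ g : ∀ v, val v,
        ∑ _h : ∀ v, val v, f₁ g * f₂ g =
        (Fintype.card (∀ v, val v) : ℝ) * (f₁ g * f₂ g) := by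
      intro g
      rw [Finset.sum_const]
      simp [mul_comm]
    rw [Finset.sum_congr rfl (fun g _ => this g), ← Finset.mul_sum]
  rw [← eval2, eval1]

end Analytic2

section Graph4
variable {C : CID V}

/-- reflexive ancestors of the parents and the irrelevant utilities -/
def W2 (C : CID V) : Set V :=
  {v | ∃ t, (t ∈ C.Pa ∨ (t ∈ C.util ∧ ¬ Relation.ReflTransGen C.E C.dec t)) ∧
    Relation.ReflTransGen C.E v t}

lemma dec_not_W2 : C.dec ∉ W2 C := by
  rintro ⟨t, ht, hrt⟩
  rcases ht with ht | ht
  · exact no_rtg_cycle C.toDAG hrt ht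
  · exact ht.2 hrt

lemma W2_parent_closed {q v : V} (e : C.E q v) (hv : v ∈ W2 C) : q ∈ W2 C := by
  obtain ⟨t, ht, hrt⟩ := hv
  exact ⟨t, ht, Relation.ReflTransGen.head e hrt⟩

lemma Pa_sub_W2 : C.Pa ⊆ W2 C := fun v hv => ⟨v, Or.inl hv, Relation.ReflTransGen.refl⟩

lemma irr_sub_W2 {u : V} (hu : u ∈ C.util) (hnr : ¬ Relation.ReflTransGen C.E C.dec u) :
    u ∈ W2 C := ⟨u, Or.inr ⟨hu, hnr⟩, Relation.ReflTransGen.refl⟩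

lemma W2_no_dec_parent {v : V} (hv : v ∈ W2 C) (e : C.E C.dec v) : False := by
  obtain ⟨t, ht, hrt⟩ := hv
  rcases ht with ht | ht
  · exact no_rtg_cycle C.toDAG (Relation.ReflTransGen.head e hrt) ht
  · exact ht.2 (Relation.ReflTransGen.head e hrt)

lemma dec_mem_W1 : C.dec ∈ W1 C := Fix_sub_W1 (Set.mem_insert _ _)

lemma NN_sub_Reach : NNs C ⊆ ReachD C := fun _ h => mem_NN_reach h

end Graph4

section Assembly
variable [Fintype V] [DecidableEq V] {C : CID V} {val : V → Type} [∀ v, Fintype (val v)]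

attribute [local instance] Classical.propDecidable

/-- the full weight function -/
def Hfun (P : C.Param val) : (∀ v, val v) → ℝ := fun b =>
  (∏ v ∈ Finset.univ.erase C.dec, P.cpt v b) * ∑ u ∈ C.util, P.uval u (b u)

/-- the context-grouped weight -/
def Phi (P : C.Param val) (a : ∀ v, val v) : ℝ :=
  ∑ g : ∀ v, val v, Hfun P (mOut (FixS C) a g)

lemma value_eq_phi (P : C.Param val) (q : (∀ v, val v) → ℝ)
    (hq : ∀ a g, q (mOut (FixS C) a g) = q a) :
    (Fintype.card (∀ v, val v) : ℝ) * C.value P q = ∑ a, q a * Phi P a := by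
  have h1 : ∑ a, q a * Phi P a =
      ∑ p : (∀ v, val v) × (∀ v, val v),
        (fun c => q c * Hfun P c) (mOut (FixS C) p.1 p.2) := by
    rw [Fintype.sum_prod_type]
    refine Finset.sum_congr rfl ?_
    intro a _
    rw [Phi, Finset.mul_sum]
    refine Finset.sum_congr rfl ?_
    intro g _
    simp only
    rw [hq a g]
  rw [h1, sum_merge (FixS C) (fun c => q c * Hfun P c)]
  congr 1
  rw [CID.value]
  refine Finset.sum_congr rfl ?_
  intro a _
  rw [Hfun]
  ring

lemma pol_dep_fix {Obs : Set V} (hObs : Obs ⊆ C.Pa) (π : C.Pol val Obs) (a g : ∀ v, val v) :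
    π.p (mOut (FixS C) a g) = π.p a := by
  refine π.depends _ _ ?_ ?_
  · exact mOut_mem (Set.mem_insert _ _)
  · intro u hu
    exact mOut_mem (Set.mem_insert_of_mem _ (hObs hu))

/-- side-A factors -/
def FAset (C : CID V) : Finset V :=
  Finset.univ.filter (fun v => v ∈ W1 C ∧ v ≠ C.dec ∧
    (v ∈ ReachD C ∨ ∃ q, C.E q v ∧ q ∈ ReachD C))
/-- side-B factors -/
def FBset (C : CID V) : Finset V :=
  Finset.univ.filter (fun v => v ∈ W1 C ∧ v ≠ C.dec ∧
    ¬ (v ∈ ReachD C ∨ ∃ q, C.E q v ∧ q ∈ ReachD C))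
/-- eliminable factors for the relevant part -/
def S3set (C : CID V) : Finset V := Finset.univ.filter (fun v => v ∉ W1 C)

lemma partition_rel : Finset.univ.erase C.dec = (FAset C ∪ FBset C) ∪ S3set C := by
  ext v
  constructor
  · intro hv
    have hvd : v ≠ C.dec := (Finset.mem_erase.mp hv).1
    by_cases hW : v ∈ W1 C
    · by_cases hR : v ∈ ReachD C ∨ ∃ q, C.E q v ∧ q ∈ ReachD C
      · exact Finset.mem_union_left _ (Finset.mem_union_left _
          (Finset.mem_filter.mpr ⟨Finset.mem_univ v, hW, hvd, hR⟩))
      · exact Finset.mem_union_left _ (Finset.mem_union_right _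
          (Finset.mem_filter.mpr ⟨Finset.mem_univ v, hW, hvd, hR⟩))
    · exact Finset.mem_union_right _ (Finset.mem_filter.mpr ⟨Finset.mem_univ v, hW⟩)
  · intro hv
    refine Finset.mem_erase.mpr ⟨?_, Finset.mem_univ v⟩
    rcases Finset.mem_union.mp hv with h | h
    · rcases Finset.mem_union.mp h with h | h <;> exact (Finset.mem_filter.mp h).2.2.1
    · intro hd
      exact (Finset.mem_filter.mp h).2 (hd ▸ dec_mem_W1)

lemma disj_AB : Disjoint (FAset C) (FBset C) := by
  rw [Finset.disjoint_left]
  intro v hA hB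
  simp only [FAset, FBset, Finset.mem_filter] at hA hB
  exact hB.2.2.2 hA.2.2.2

lemma disj_ABS : Disjoint (FAset C ∪ FBset C) (S3set C) := by
  rw [Finset.disjoint_left]
  intro v hAB hS
  simp only [FAset, FBset, S3set, Finset.mem_filter, Finset.mem_union] at hAB hS
  rcases hAB with h | h
  · exact hS.2 h.2.1
  · exact hS.2 h.2.1

/-- relevant utilities as a finset -/
def relUF (C : CID V) : Finset V :=
  C.util.filter (fun u => Relation.ReflTransGen C.E C.dec u)
/-- irrelevant utilities as a finset -/
def irrUF (C : CID V) : Finset V :=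
  C.util.filter (fun u => ¬ Relation.ReflTransGen C.E C.dec u)

lemma mem_relUF {u : V} : u ∈ relUF C ↔ u ∈ relU C := by
  simp [relUF, relU, Finset.mem_filter]

def PhiRel (P : C.Param val) (a : ∀ v, val v) : ℝ :=
  ∑ g : ∀ v, val v, (∏ v ∈ Finset.univ.erase C.dec, P.cpt v (mOut (FixS C) a g)) *
    ∑ u ∈ relUF C, P.uval u (mOut (FixS C) a g u)

def PhiIrr (P : C.Param val) (a : ∀ v, val v) : ℝ :=
  ∑ g : ∀ v, val v, (∏ v ∈ Finset.univ.erase C.dec, P.cpt v (mOut (FixS C) a g)) *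
    ∑ u ∈ irrUF C, P.uval u (mOut (FixS C) a g u)

lemma phi_split (P : C.Param val) (a : ∀ v, val v) :
    Phi P a = PhiRel P a + PhiIrr P a := by
  rw [Phi, PhiRel, PhiIrr, ← Finset.sum_add_distrib]
  refine Finset.sum_congr rfl ?_
  intro g _
  rw [Hfun, ← mul_add]
  congr 1
  rw [relUF, irrUF]
  exact (Finset.sum_filter_add_sum_filter_not _ _ _).symm

end Assembly

section Assembly2
variable [Fintype V] [DecidableEq V] {C : CID V} {val : V → Type} [∀ v, Fintype (val v)]

attribute [local instance] Classical.propDecidable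

def W2F (C : CID V) : Finset V := Finset.univ.filter (fun v => v ∈ W2 C)
def S2set (C : CID V) : Finset V := Finset.univ.filter (fun v => v ∉ W2 C ∧ v ≠ C.dec)

lemma partition_irr : Finset.univ.erase C.dec = W2F C ∪ S2set C := by
  ext v
  constructor
  · intro hv
    have hvd : v ≠ C.dec := (Finset.mem_erase.mp hv).1
    by_cases hW : v ∈ W2 C
    · exact Finset.mem_union_left _ (Finset.mem_filter.mpr ⟨Finset.mem_univ v, hW⟩)
    · exact Finset.mem_union_right _ (Finset.mem_filter.mpr ⟨Finset.mem_univ v, hW, hvd⟩)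
  · intro hv
    refine Finset.mem_erase.mpr ⟨?_, Finset.mem_univ v⟩
    rcases Finset.mem_union.mp hv with h | h
    · intro hd
      exact dec_not_W2 (hd ▸ (Finset.mem_filter.mp h).2)
    · exact (Finset.mem_filter.mp h).2.2

lemma disj_W2S : Disjoint (W2F C) (S2set C) := by
  rw [Finset.disjoint_left]
  intro v h1 h2
  exact (Finset.mem_filter.mp h2).2.1 (Finset.mem_filter.mp h1).2

lemma card_pi_ne_zero (hne : ∀ v, Nonempty (val v)) :
    (Fintype.card (∀ v, val v) : ℝ) ≠ 0 := by
  have : Nonempty (∀ v, val v) := ⟨fun v => (hne v).some⟩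
  have := Fintype.card_pos_iff.mpr this
  positivity

lemma phiIrr_indep (P : C.Param val) (hne : ∀ v, Nonempty (val v)) (a b : ∀ v, val v)
    (hab : ∀ v, v ≠ C.dec → a v = b v) : PhiIrr P a = PhiIrr P b := by
  set f : (∀ v, val v) → (∀ v, val v) → ℝ := fun c g =>
    (∏ v ∈ W2F C, P.cpt v (mOut (FixS C) c g)) *
      ∑ u ∈ irrUF C, P.uval u (mOut (FixS C) c g u) with hf
  have hW2ne : ∀ w : V, w ∈ W2 C → w ≠ C.dec := fun w hw h => dec_not_W2 (h ▸ hw)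
  have step1 : ∀ c, PhiIrr P c =
      ∑ g, f c g * ∏ v ∈ S2set C, P.cpt v (mOut (FixS C) c g) := by
    intro c
    rw [PhiIrr]
    refine Finset.sum_congr rfl ?_
    intro g _
    rw [partition_irr, Finset.prod_union disj_W2S, hf]
    ring
  have hfdep : ∀ c g h, (∀ v, v ∉ S2set C → g v = h v) → f c g = f c h := by
    intro c g h hgh
    have hcoord : ∀ w, w ∈ W2 C → mOut (FixS C) c g w = mOut (FixS C) c h w := by
      intro w hw
      by_cases hwF : w ∈ FixS C
      · rw [mOut_mem hwF, mOut_mem hwF]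
      · rw [mOut_not_mem hwF, mOut_not_mem hwF]
        refine hgh w ?_
        intro hS
        exact (Finset.mem_filter.mp hS).2.1 hw
    rw [hf]
    simp only
    congr 1
    · refine Finset.prod_congr rfl ?_
      intro v hv
      have hvW : v ∈ W2 C := (Finset.mem_filter.mp hv).2
      refine P.cpt_local v (hW2ne v hvW) _ _ (hcoord v hvW) ?_
      intro u hu
      exact hcoord u (W2_parent_closed hu hvW)
    · refine Finset.sum_congr rfl ?_
      intro u hu
      have huW : u ∈ W2 C := by
        have := Finset.mem_filter.mp hu
        exact irr_sub_W2 this.1 this.2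
      rw [hcoord u huW]
  have hfab : ∀ g, f a g = f b g := by
    intro g
    have hcoord : ∀ w, w ∈ W2 C → mOut (FixS C) a g w = mOut (FixS C) b g w := by
      intro w hw
      by_cases hwF : w ∈ FixS C
      · rw [mOut_mem hwF, mOut_mem hwF]
        exact hab w (hW2ne w hw)
      · rw [mOut_not_mem hwF, mOut_not_mem hwF]
    rw [hf]
    simp only
    congr 1
    · refine Finset.prod_congr rfl ?_
      intro v hv
      have hvW : v ∈ W2 C := (Finset.mem_filter.mp hv).2
      refine P.cpt_local v (hW2ne v hvW) _ _ (hcoord v hvW) ?_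
      intro u hu
      exact hcoord u (W2_parent_closed hu hvW)
    · refine Finset.sum_congr rfl ?_
      intro u hu
      have huW : u ∈ W2 C := by
        have := Finset.mem_filter.mp hu
        exact irr_sub_W2 this.1 this.2
      rw [hcoord u huW]
  have hD2 : C.dec ∉ S2set C := by
    intro h
    exact (Finset.mem_filter.mp h).2.2 rfl
  have hSK2 : ∀ v ∈ S2set C, v ∉ FixS C := by
    intro v hv hF
    have h' := Finset.mem_filter.mp hv
    rcases Set.mem_insert_iff.mp hF with h | h
    · exact h'.2.2 h
    · exact h'.2.1 (Pa_sub_W2 h)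
  have hea := elim_factors P hne (FixS C) a (S2set C) hD2 hSK2 (f a) (hfdep a)
  have heb := elim_factors P hne (FixS C) b (S2set C) hD2 hSK2 (f b) (hfdep b)
  apply mul_left_cancel₀ (card_pi_ne_zero hne)
  rw [step1 a, step1 b, hea, heb]
  congr 1
  exact Finset.sum_congr rfl (fun g _ => hfab g)

def WAf (P : C.Param val) (a : ∀ v, val v) : ℝ :=
  ∑ g : ∀ v, val v, ∏ v ∈ FAset C, P.cpt v (mOut (FixS C) a g)

def QBf (P : C.Param val) (a : ∀ v, val v) : ℝ :=
  ∑ g : ∀ v, val v, (∏ v ∈ FBset C, P.cpt v (mOut (FixS C) a g)) *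
    ∑ u ∈ relUF C, P.uval u (mOut (FixS C) a g u)

/-- the reachable summed variables -/
def TA (C : CID V) : Set V := {v | v ∈ ReachD C ∧ v ∉ FixS C}

lemma phiRel_factor (P : C.Param val) (hne : ∀ v, Nonempty (val v)) (a : ∀ v, val v) :
    (Fintype.card (∀ v, val v) : ℝ)^2 * PhiRel P a =
      (∏ v ∈ (S3set C)ᶜ, (Fintype.card (val v) : ℝ)) * (WAf P a * QBf P a) := by
  set fA : (∀ v, val v) → ℝ := fun g => ∏ v ∈ FAset C, P.cpt v (mOut (FixS C) a g) with hfA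
  set fB : (∀ v, val v) → ℝ := fun g =>
    (∏ v ∈ FBset C, P.cpt v (mOut (FixS C) a g)) *
      ∑ u ∈ relUF C, P.uval u (mOut (FixS C) a g u) with hfB
  have step1 : PhiRel P a =
      ∑ g, (fA g * fB g) * ∏ v ∈ S3set C, P.cpt v (mOut (FixS C) a g) := by
    rw [PhiRel]
    refine Finset.sum_congr rfl ?_
    intro g _
    rw [partition_rel, Finset.prod_union disj_ABS, Finset.prod_union disj_AB, hfA, hfB]
    ring
  have hD3 : C.dec ∉ S3set C := by
    intro h
    exact (Finset.mem_filter.mp h).2 dec_mem_W1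
  have hSK3 : ∀ v ∈ S3set C, v ∉ FixS C := by
    intro v hv hF
    exact (Finset.mem_filter.mp hv).2 (Fix_sub_W1 hF)
  have hcoordW1 : ∀ (g h : ∀ v, val v), (∀ v, v ∉ S3set C → g v = h v) →
      ∀ w, w ∈ W1 C → mOut (FixS C) a g w = mOut (FixS C) a h w := by
    intro g h hgh w hw
    by_cases hwF : w ∈ FixS C
    · rw [mOut_mem hwF, mOut_mem hwF]
    · rw [mOut_not_mem hwF, mOut_not_mem hwF]
      refine hgh w ?_
      intro hS
      exact (Finset.mem_filter.mp hS).2 hw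
  have hfdep : ∀ g h, (∀ v, v ∉ S3set C → g v = h v) → fA g * fB g = fA h * fB h := by
    intro g h hgh
    have hc := hcoordW1 g h hgh
    rw [hfA, hfB]
    simp only
    congr 1
    · refine Finset.prod_congr rfl ?_
      intro v hv
      have h' := (Finset.mem_filter.mp hv).2
      refine P.cpt_local v h'.2.1 _ _ (hc v h'.1) ?_
      intro u hu
      exact hc u (W1_parent_closed hu h'.1)
    · congr 1
      · refine Finset.prod_congr rfl ?_
        intro v hv
        have h' := (Finset.mem_filter.mp hv).2
        refine P.cpt_local v h'.2.1 _ _ (hc v h'.1) ?_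
        intro u hu
        exact hc u (W1_parent_closed hu h'.1)
      · refine Finset.sum_congr rfl ?_
        intro u hu
        exact congrArg _ (hc u (relU_sub_W1 (mem_relUF.mp hu)))
  have helim := elim_factors P hne (FixS C) a (S3set C) hD3 hSK3 (fun g => fA g * fB g) hfdep
  have hfA_dep : ∀ g h : ∀ v, val v, (∀ v ∈ TA C, g v = h v) → fA g = fA h := by
    intro g h hgh
    rw [hfA]
    simp only
    refine Finset.prod_congr rfl ?_
    intro v hv
    have h' := (Finset.mem_filter.mp hv).2
    have hAv := Aside_vars h'.1 h'.2.1 h'.2.2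
    have hc : ∀ w, (w = v ∨ C.E w v) → mOut (FixS C) a g w = mOut (FixS C) a h w := by
      intro w hw
      by_cases hwF : w ∈ FixS C
      · rw [mOut_mem hwF, mOut_mem hwF]
      · rw [mOut_not_mem hwF, mOut_not_mem hwF]
        exact hgh w ⟨hAv.1 w hw hwF, hwF⟩
    refine P.cpt_local v h'.2.1 _ _ (hc v (Or.inl rfl)) ?_
    intro u hu
    exact hc u (Or.inr hu)
  have hfB_dep : ∀ g h : ∀ v, val v, (∀ v, v ∉ TA C → g v = h v) → fB g = fB h := by
    intro g h hgh
    rw [hfB]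
    simp only
    have hc : ∀ v, v ∈ FBset C → ∀ w, (w = v ∨ C.E w v) →
        mOut (FixS C) a g w = mOut (FixS C) a h w := by
      intro v hv w hw
      have h' := (Finset.mem_filter.mp hv).2
      by_cases hwF : w ∈ FixS C
      · rw [mOut_mem hwF, mOut_mem hwF]
      · rw [mOut_not_mem hwF, mOut_not_mem hwF]
        refine hgh w ?_
        intro hT
        rcases hw with rfl | hw
        · exact h'.2.2 (Or.inl hT.1)
        · exact h'.2.2 (Or.inr ⟨w, hw, hT.1⟩)
    congr 1
    · refine Finset.prod_congr rfl ?_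
      intro v hv
      have h' := (Finset.mem_filter.mp hv).2
      refine P.cpt_local v h'.2.1 _ _ (hc v hv v (Or.inl rfl)) ?_
      intro u hu
      exact hc v hv u (Or.inr hu)
    · refine Finset.sum_congr rfl ?_
      intro u hu
      have hu' := mem_relUF.mp hu
      have huT : u ∉ TA C := fun hT => relU_not_reach hu' hT.1
      have huF : u ∉ FixS C := relU_not_Fix hu'
      rw [mOut_not_mem huF, mOut_not_mem huF, hgh u huT]
  have hsplit := split_factors (TA C) fA fB hfA_dep hfB_dep
  have : (Fintype.card (∀ v, val v) : ℝ)^2 * PhiRel P a =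
      (Fintype.card (∀ v, val v) : ℝ) *
        ((Fintype.card (∀ v, val v) : ℝ) * ∑ g, fA g * fB g *
          ∏ v ∈ S3set C, P.cpt v (mOut (FixS C) a g)) := by
    rw [step1]; ring
  rw [this, helim]
  have : (∏ v ∈ (S3set C)ᶜ, (Fintype.card (val v) : ℝ)) *
        ((Fintype.card (∀ v, val v) : ℝ) * ∑ g, fA g * fB g) =
      (∏ v ∈ (S3set C)ᶜ, (Fintype.card (val v) : ℝ)) * ((∑ g, fA g) * (∑ g, fB g)) := by
    rw [hsplit]
  calc (Fintype.card (∀ v, val v) : ℝ) *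
        ((∏ v ∈ (S3set C)ᶜ, (Fintype.card (val v) : ℝ)) * ∑ g, fA g * fB g)
      = (∏ v ∈ (S3set C)ᶜ, (Fintype.card (val v) : ℝ)) *
        ((Fintype.card (∀ v, val v) : ℝ) * ∑ g, fA g * fB g) := by ring
    _ = (∏ v ∈ (S3set C)ᶜ, (Fintype.card (val v) : ℝ)) * ((∑ g, fA g) * (∑ g, fB g)) := this
    _ = (∏ v ∈ (S3set C)ᶜ, (Fintype.card (val v) : ℝ)) * (WAf P a * QBf P a) := rfl

end Assembly2

section Assembly3
variable [Fintype V] [DecidableEq V] {C : CID V} {val : V → Type} [∀ v, Fintype (val v)]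

attribute [local instance] Classical.propDecidable

lemma WAf_nonneg (P : C.Param val) (a : ∀ v, val v) : 0 ≤ WAf P a :=
  Finset.sum_nonneg fun g _ => Finset.prod_nonneg fun v _ => P.cpt_nonneg v _

lemma WAf_dec_indep (P : C.Param val) (a : ∀ v, val v) (d d' : val C.dec) :
    WAf P (Function.update a C.dec d) = WAf P (Function.update a C.dec d') := by
  refine Finset.sum_congr rfl ?_
  intro g _
  refine Finset.prod_congr rfl ?_
  intro v hv
  have h' := (Finset.mem_filter.mp hv).2
  have hAv := Aside_vars h'.1 h'.2.1 h'.2.2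
  have hc : ∀ w, (w = v ∨ C.E w v) →
      mOut (FixS C) (Function.update a C.dec d) g w =
      mOut (FixS C) (Function.update a C.dec d') g w := by
    intro w hw
    by_cases hwF : w ∈ FixS C
    · rw [mOut_mem hwF, mOut_mem hwF]
      have hwdec : w ≠ C.dec := by
        rintro rfl
        rcases hw with rfl | hw
        · exact h'.2.1 rfl
        · exact hAv.2 hw
      rw [Function.update_of_ne hwdec, Function.update_of_ne hwdec]
    · rw [mOut_not_mem hwF, mOut_not_mem hwF]
  exact P.cpt_local v h'.2.1 _ _ (hc v (Or.inl rfl)) (fun u hu => hc u (Or.inr hu))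

lemma QBf_req_dep (P : C.Param val) (a b : ∀ v, val v) (d : val C.dec)
    (hab : ∀ u ∈ RRs C, a u = b u) :
    QBf P (Function.update a C.dec d) = QBf P (Function.update b C.dec d) := by
  refine Finset.sum_congr rfl ?_
  intro g _
  have hc : ∀ v, v ∈ FBset C → ∀ w, (w = v ∨ C.E w v) →
      mOut (FixS C) (Function.update a C.dec d) g w =
      mOut (FixS C) (Function.update b C.dec d) g w := by
    intro v hv w hw
    have h' := (Finset.mem_filter.mp hv).2
    by_cases hwF : w ∈ FixS C
    · rw [mOut_mem hwF, mOut_mem hwF]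
      by_cases hwdec : w = C.dec
      · subst hwdec
        rw [Function.update_self, Function.update_self]
      · rw [Function.update_of_ne hwdec, Function.update_of_ne hwdec]
        have hwPa : w ∈ C.Pa := by
          rcases Set.mem_insert_iff.mp hwF with h | h
          · exact absurd h hwdec
          · exact h
        by_cases hwR : w ∈ RRs C
        · exact hab w hwR
        · have hwN : w ∈ ReachD C := NN_sub_Reach ⟨hwPa, hwR⟩
          rcases hw with rfl | hw
          · exact absurd (Or.inl hwN) h'.2.2
          · exact absurd (Or.inr ⟨w, hw, hwN⟩) h'.2.2
    · rw [mOut_not_mem hwF, mOut_not_mem hwF]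
  congr 1
  · refine Finset.prod_congr rfl ?_
    intro v hv
    have h' := (Finset.mem_filter.mp hv).2
    exact P.cpt_local v h'.2.1 _ _ (hc v hv v (Or.inl rfl)) (fun u hu => hc v hv u (Or.inr hu))
  · refine Finset.sum_congr rfl ?_
    intro u hu
    have hu' := mem_relUF.mp hu
    have huF : u ∉ FixS C := relU_not_Fix hu'
    rw [mOut_not_mem huF, mOut_not_mem huF]

noncomputable def pick (hd : Nonempty (val C.dec)) (f : val C.dec → ℝ) : val C.dec :=
  Classical.choose (Finset.exists_max_image Finset.univ f (Finset.univ_nonempty_iff.mpr hd))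

lemma pick_spec (hd : Nonempty (val C.dec)) (f : val C.dec → ℝ) (d : val C.dec) :
    f d ≤ f (pick hd f) := by
  have h := Classical.choose_spec
    (Finset.exists_max_image Finset.univ f (Finset.univ_nonempty_iff.mpr hd))
  exact h.2 d (Finset.mem_univ d)

noncomputable def sigmaf (P : C.Param val) (hd : Nonempty (val C.dec)) (a : ∀ v, val v) :
    val C.dec :=
  pick hd (fun d => QBf P (Function.update a C.dec d))

lemma sigmaf_update (P : C.Param val) (hd : Nonempty (val C.dec)) (a : ∀ v, val v)
    (d : val C.dec) : sigmaf P hd (Function.update a C.dec d) = sigmaf P hd a := by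
  unfold sigmaf
  congr 1
  funext d'
  rw [Function.update_idem]

lemma sigmaf_dep (P : C.Param val) (hd : Nonempty (val C.dec)) (a b : ∀ v, val v)
    (hab : ∀ u ∈ RRs C, a u = b u) : sigmaf P hd a = sigmaf P hd b := by
  unfold sigmaf
  congr 1
  funext d
  exact QBf_req_dep P a b d hab

/-- the greedy deterministic policy depending only on requisite observations -/
noncomputable def polStar (P : C.Param val) (hd : Nonempty (val C.dec)) :
    C.Pol val (RRs C) where
  p := fun a => if a C.dec = sigmaf P hd a then 1 else 0
  nonneg := fun a => by
    by_cases h : a C.dec = sigmaf P hd a <;> simp [h]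
  depends := fun a b hdec hobs => by
    show (if a C.dec = sigmaf P hd a then (1:ℝ) else 0) =
      (if b C.dec = sigmaf P hd b then (1:ℝ) else 0)
    rw [sigmaf_dep P hd a b hobs, hdec]
  sum := fun a => by
    show ∑ d : val C.dec,
      (if (Function.update a C.dec d) C.dec = sigmaf P hd (Function.update a C.dec d)
        then (1:ℝ) else 0) = 1
    have h1 : ∀ d : val C.dec,
        (if (Function.update a C.dec d) C.dec = sigmaf P hd (Function.update a C.dec d)
          then (1:ℝ) else 0) = if d = sigmaf P hd a then (1:ℝ) else 0 := by
      intro d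
      rw [Function.update_self, sigmaf_update]
    rw [Finset.sum_congr rfl (fun d _ => h1 d),
      Finset.sum_ite_eq' Finset.univ (sigmaf P hd a) (fun _ => (1:ℝ))]
    simp

end Assembly3

section Assembly4
variable [Fintype V] [DecidableEq V] {C : CID V} {val : V → Type} [∀ v, Fintype (val v)]

attribute [local instance] Classical.propDecidable

lemma per_context (P : C.Param val) (hne : ∀ v, Nonempty (val v)) (π : C.Pol val C.Pa)
    (a : ∀ v, val v) :
    ∑ d : val C.dec, π.p (Function.update a C.dec d) * Phi P (Function.update a C.dec d) ≤
    ∑ d : val C.dec, (polStar P (hne C.dec)).p (Function.update a C.dec d) *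
      Phi P (Function.update a C.dec d) := by
  have hd := hne C.dec
  have hκpos : 0 < (Fintype.card (∀ v, val v) : ℝ) := by
    have : Nonempty (∀ v, val v) := ⟨fun v => (hne v).some⟩
    exact_mod_cast Fintype.card_pos
  set κ : ℝ := (Fintype.card (∀ v, val v) : ℝ) with hκ
  set c3 : ℝ := ∏ v ∈ (S3set C)ᶜ, (Fintype.card (val v) : ℝ) with hc3
  have hc3n : 0 ≤ c3 := Finset.prod_nonneg (fun v _ => by positivity)
  set d₀ : val C.dec := sigmaf P hd a with hd₀
  set W : ℝ := WAf P (Function.update a C.dec d₀) with hWdef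
  set I : ℝ := PhiIrr P (Function.update a C.dec d₀) with hIdef
  have hWn : 0 ≤ W := WAf_nonneg P _
  set K : val C.dec → ℝ :=
    fun d => c3 * (W * QBf P (Function.update a C.dec d)) + κ^2 * I with hK
  have hPhi : ∀ d, κ^2 * Phi P (Function.update a C.dec d) = K d := by
    intro d
    rw [hK]
    simp only
    rw [phi_split, mul_add]
    congr 1
    · rw [phiRel_factor P hne, ← hc3]
      rw [WAf_dec_indep P a d d₀, ← hWdef]
    · rw [hIdef]
      rw [phiIrr_indep P hne (Function.update a C.dec d) (Function.update a C.dec d₀)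
        (fun v hv => by rw [Function.update_of_ne hv, Function.update_of_ne hv])]
  have hqle : ∀ d, QBf P (Function.update a C.dec d) ≤
      QBf P (Function.update a C.dec d₀) := by
    intro d
    rw [hd₀]
    exact pick_spec hd (fun d => QBf P (Function.update a C.dec d)) d
  have hKle : ∀ d, K d ≤ K d₀ := by
    intro d
    rw [hK]
    simp only
    refine add_le_add_left (mul_le_mul_of_nonneg_left ?_ hc3n) _
    exact mul_le_mul_of_nonneg_left (hqle d) hWn
  have hstar : ∀ d, (polStar P hd).p (Function.update a C.dec d) =
      if d = d₀ then (1:ℝ) else 0 := by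
    intro d
    show (if (Function.update a C.dec d) C.dec =
      sigmaf P hd (Function.update a C.dec d) then (1:ℝ) else 0) = _
    rw [Function.update_self, sigmaf_update, hd₀]
  have hsq : (0:ℝ) < κ^2 := by positivity
  refine le_of_mul_le_mul_left ?_ hsq
  rw [Finset.mul_sum, Finset.mul_sum]
  have hterm : ∀ (pp : (∀ v, val v) → ℝ) d,
      κ^2 * (pp (Function.update a C.dec d) * Phi P (Function.update a C.dec d)) =
      pp (Function.update a C.dec d) * K d := by
    intro pp d
    rw [← hPhi d]
    ring
  rw [Finset.sum_congr rfl (fun d _ => hterm π.p d),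
    Finset.sum_congr rfl (fun d _ => hterm (polStar P hd).p d)]
  have hrhs : ∑ d, (polStar P hd).p (Function.update a C.dec d) * K d = K d₀ := by
    have h1 : ∀ d, (polStar P hd).p (Function.update a C.dec d) * K d =
        if d = d₀ then K d else 0 := by
      intro d
      rw [hstar d]
      by_cases h : d = d₀ <;> simp [h]
    rw [Finset.sum_congr rfl (fun d _ => h1 d), Finset.sum_ite_eq' Finset.univ d₀ K]
    simp
  rw [hrhs]
  calc ∑ d, π.p (Function.update a C.dec d) * K d
      ≤ ∑ d, π.p (Function.update a C.dec d) * K d₀ :=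
        Finset.sum_le_sum (fun d _ => mul_le_mul_of_nonneg_left (hKle d) (π.nonneg _))
    _ = K d₀ := by rw [← Finset.sum_mul, π.sum, one_mul]

lemma value_le_value_star (P : C.Param val) (hne : ∀ v, Nonempty (val v))
    (π : C.Pol val C.Pa) :
    C.value P π.p ≤ C.value P (polStar P (hne C.dec)).p := by
  have hκpos : 0 < (Fintype.card (∀ v, val v) : ℝ) := by
    have : Nonempty (∀ v, val v) := ⟨fun v => (hne v).some⟩
    exact_mod_cast Fintype.card_pos
  have hDpos : 0 < (Fintype.card (val C.dec) : ℝ) := by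
    have := hne C.dec
    exact_mod_cast Fintype.card_pos
  have h1 := value_eq_phi P π.p (pol_dep_fix (fun _ h => h) π)
  have h2 := value_eq_phi P (polStar P (hne C.dec)).p (pol_dep_fix RRs_sub_Pa _)
  have hdouble : ∑ a : ∀ v, val v, ∑ d : val C.dec,
      π.p (Function.update a C.dec d) * Phi P (Function.update a C.dec d) ≤
      ∑ a : ∀ v, val v, ∑ d : val C.dec,
      (polStar P (hne C.dec)).p (Function.update a C.dec d) *
        Phi P (Function.update a C.dec d) :=
    Finset.sum_le_sum (fun a _ => per_context P hne π a)
  rw [sum_update_sum C.dec (fun a => π.p a * Phi P a),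
    sum_update_sum C.dec (fun a => (polStar P (hne C.dec)).p a * Phi P a)] at hdouble
  have hsum := le_of_mul_le_mul_left hdouble hDpos
  rw [← h1, ← h2] at hsum
  exact le_of_mul_le_mul_left hsum hκpos

lemma pol_p_le_one {Obs : Set V} (π : C.Pol val Obs) (a : ∀ v, val v) : π.p a ≤ 1 := by
  have hsum := π.sum a
  have h : π.p a = π.p (Function.update a C.dec (a C.dec)) := by
    rw [Function.update_eq_self]
  rw [h, ← hsum]
  exact Finset.single_le_sum (f := fun d => π.p (Function.update a C.dec d))
    (fun d _ => π.nonneg _) (Finset.mem_univ (a C.dec))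

lemma value_bound (P : C.Param val) {Obs : Set V} (π : C.Pol val Obs) :
    C.value P π.p ≤ ∑ a : ∀ v, val v, (∏ v ∈ Finset.univ.erase C.dec, P.cpt v a) *
      |∑ u ∈ C.util, P.uval u (a u)| := by
  rw [CID.value]
  refine Finset.sum_le_sum ?_
  intro a _
  have hprodnn : 0 ≤ ∏ v ∈ Finset.univ.erase C.dec, P.cpt v a :=
    Finset.prod_nonneg (fun v _ => P.cpt_nonneg v a)
  have h1 : (π.p a * ∏ v ∈ Finset.univ.erase C.dec, P.cpt v a) * ∑ u ∈ C.util, P.uval u (a u)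
      ≤ (π.p a * ∏ v ∈ Finset.univ.erase C.dec, P.cpt v a) *
        |∑ u ∈ C.util, P.uval u (a u)| :=
    mul_le_mul_of_nonneg_left (le_abs_self _) (mul_nonneg (π.nonneg a) hprodnn)
  refine h1.trans ?_
  refine mul_le_mul_of_nonneg_right ?_ (abs_nonneg _)
  calc π.p a * ∏ v ∈ Finset.univ.erase C.dec, P.cpt v a
      ≤ 1 * ∏ v ∈ Finset.univ.erase C.dec, P.cpt v a :=
        mul_le_mul_of_nonneg_right (pol_p_le_one π a) hprodnn
    _ = _ := one_mul _

/-- a trivial policy, showing `Pol` is always nonempty -/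
noncomputable def trivPol (C : CID V) (val : V → Type) [∀ v, Fintype (val v)] (Obs : Set V) :
    C.Pol val Obs :=
  if hd : Nonempty (val C.dec) then
    { p := fun _ => (Fintype.card (val C.dec) : ℝ)⁻¹
      nonneg := fun _ => by positivity
      depends := fun _ _ _ _ => rfl
      sum := fun a => by
        rw [Finset.sum_const]
        simp only [Finset.card_univ, nsmul_eq_mul]
        rw [mul_inv_cancel₀]
        exact_mod_cast Fintype.card_ne_zero (α := val C.dec)
    }
  else
    { p := fun _ => 0
      nonneg := fun _ => le_refl 0
      depends := fun _ _ _ _ => rfl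
      sum := fun a => (hd ⟨a C.dec⟩).elim }

end Assembly4

end VOIAux
end

/-- Removing all nonrequisite information links yields a reduced graph in which, for any
parameterization, the optimal value equals the optimal value in the original graph:
the supremum of the value over policies that depend only on the requisite observations
equals the supremum over policies depending on all of `Pa_D`. -/
theorem stmt8 {V : Type} [Fintype V] [DecidableEq V] (C : CID V) (val : V → Type)
    [∀ v, Fintype (val v)] (P : C.Param val) :
    (⨆ π : C.Pol val {O | C.Requisite O}, C.value P π.p) =
      ⨆ π : C.Pol val C.Pa, C.value P π.p := by
  classical
  have hLne : Nonempty (C.Pol val {O | C.Requisite O}) := ⟨VOIAux.trivPol C val _⟩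
  have hRne : Nonempty (C.Pol val C.Pa) := ⟨VOIAux.trivPol C val _⟩
  have hbddL : BddAbove (Set.range fun π : C.Pol val {O | C.Requisite O} => C.value P π.p) := by
    refine ⟨∑ a : ∀ v, val v, (∏ v ∈ Finset.univ.erase C.dec, P.cpt v a) *
      |∑ u ∈ C.util, P.uval u (a u)|, ?_⟩
    rintro x ⟨π, rfl⟩
    exact VOIAux.value_bound P π
  have hbddR : BddAbove (Set.range fun π : C.Pol val C.Pa => C.value P π.p) := by
    refine ⟨∑ a : ∀ v, val v, (∏ v ∈ Finset.univ.erase C.dec, P.cpt v a) *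
      |∑ u ∈ C.util, P.uval u (a u)|, ?_⟩
    rintro x ⟨π, rfl⟩
    exact VOIAux.value_bound P π
  apply le_antisymm
  · refine ciSup_le ?_
    intro π
    exact le_ciSup_of_le hbddR
      ⟨π.p, π.nonneg,
        fun a b h1 h2 => π.depends a b h1 (fun u hu => h2 u (VOIAux.RRs_sub_Pa hu)),
        π.sum⟩ le_rfl
  · refine ciSup_le ?_
    intro π
    by_cases hne : ∀ v, Nonempty (val v)
    · exact le_ciSup_of_le hbddL (VOIAux.polStar P (hne C.dec))
        (VOIAux.value_le_value_star P hne π)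
    · push_neg at hne
      obtain ⟨v₀, hv₀⟩ := hne
      haveI : IsEmpty (∀ v, val v) := ⟨fun a => IsEmpty.elim hv₀ (a v₀)⟩
      have hval0 : ∀ q : (∀ v, val v) → ℝ, C.value P q = 0 := by
        intro q
        rw [CID.value, Finset.univ_eq_empty, Finset.sum_empty]
      rw [hval0]
      refine le_ciSup_of_le hbddL (VOIAux.trivPol C val _) ?_
      rw [hval0]
end

section
/- In a single-decision CID graph, if there is no directed path from a non-decision node X to any utility node, then for every parameterization, no soft intervention on X can change the expected utility of any policy; hence there is no intervention incentive for X. -/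
open Finset

lemma sum_update_mul {V : Type} [Fintype V] [DecidableEq V] {val : V → Type}
    [∀ v, Fintype (val v)] (w : V) (f : (∀ v, val v) → ℝ) :
    ∑ x : val w, ∑ a : ∀ v, val v, f (Function.update a w x)
      = (Fintype.card (val w) : ℝ) * ∑ a : ∀ v, val v, f a := by
  classical
  have hinv : Function.Involutive
      (fun p : (∀ v, val v) × val w => (Function.update p.1 w p.2, p.1 w)) := by
    rintro ⟨a, x⟩; simp [Function.update_idem]
  have h1 : ∑ p : (∀ v, val v) × val w, f (Function.update p.1 w p.2)
      = ∑ p : (∀ v, val v) × val w, f p.1 :=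
    Fintype.sum_bijective _ hinv.bijective _ _ (fun p => rfl)
  rw [Fintype.sum_prod_type, Finset.sum_comm] at h1
  rw [h1, Fintype.sum_prod_type]
  simp [Finset.sum_const, card_univ, mul_comm, Finset.mul_sum]

lemma marginalize {V : Type} [Fintype V] [DecidableEq V] {val : V → Type}
    [∀ v, Fintype (val v)] (w : V) (K h : (∀ v, val v) → ℝ)
    (hK : ∀ a x, K (Function.update a w x) = K a)
    (hh : ∀ a, ∑ x : val w, h (Function.update a w x) = 1) :
    ∑ a : ∀ v, val v, K a * h a = ((Fintype.card (val w) : ℝ))⁻¹ * ∑ a : ∀ v, val v, K a := by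
  classical
  rcases isEmpty_or_nonempty (val w) with he | hne
  · haveI : IsEmpty (∀ v, val v) := ⟨fun a => IsEmpty.false (a w)⟩
    simp
  · have hc : (Fintype.card (val w) : ℝ) ≠ 0 := Nat.cast_ne_zero.2 Fintype.card_ne_zero
    have key := sum_update_mul w (fun a => K a * h a)
    have h2 : ∑ x : val w, ∑ a : ∀ v, val v,
        K (Function.update a w x) * h (Function.update a w x) = ∑ a : ∀ v, val v, K a := by
      rw [Finset.sum_comm]
      simp_rw [hK, ← Finset.mul_sum, hh, mul_one]
    rw [h2] at key
    field_simp
    linarith [key]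

lemma reduce {V : Type} [Fintype V] [DecidableEq V] (C : CID V) {val : V → Type}
    [∀ v, Fintype (val v)] (P : C.Param val) (π : C.Pol val C.Pa) :
    ∀ n (R : Finset V), R.card = n →
      (∀ w ∈ R, ∀ v, C.E w v → v ∈ R) → (∀ w ∈ R, w ∉ C.util) →
      C.value P π.p = (∏ w ∈ R, (Fintype.card (val w) : ℝ))⁻¹ *
        ∑ a : ∀ v : V, val v, ((if C.dec ∈ R then 1 else π.p a) *
          ∏ v ∈ Finset.univ.erase C.dec \ R, P.cpt v a) * ∑ u ∈ C.util, P.uval u (a u) := by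
  intro n
  induction n using Nat.strong_induction_on with
  | _ n ih =>
  intro R hcard hcl hut
  rcases R.eq_empty_or_nonempty with rfl | hne
  · simp [CID.value]
  · haveI : IsTrans V (Relation.TransGen C.E) := ⟨fun _ _ _ => Relation.TransGen.trans⟩
    haveI : IsIrrefl V (Relation.TransGen C.E) := ⟨fun v h => C.acyclic v h⟩
    have hwf : WellFounded (Relation.TransGen C.E) :=
      Finite.wellFounded_of_trans_of_irrefl _
    obtain ⟨w, hwR0, hmin⟩ := hwf.has_min (R : Set V) (by exact_mod_cast hne)
    have hwR : w ∈ R := hwR0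
    have hnopar : ∀ v ∈ R, ¬ C.E v w := fun v hv hE =>
      hmin v hv (Relation.TransGen.single hE)
    have hwch : ∀ v, C.E w v → v ∈ R := hcl w hwR
    have hwnu : w ∉ C.util := hut w hwR
    have hcard' : (R.erase w).card < n := by
      rw [← hcard]; exact Finset.card_erase_lt_of_mem hwR
    have hcl' : ∀ u ∈ R.erase w, ∀ v, C.E u v → v ∈ R.erase w := by
      intro u hu v hE
      have huR := Finset.mem_of_mem_erase hu
      refine Finset.mem_erase.2 ⟨?_, hcl u huR v hE⟩
      rintro rfl
      exact hnopar u huR hE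
    have hut' : ∀ u ∈ R.erase w, u ∉ C.util := fun u hu => hut u (Finset.mem_of_mem_erase hu)
    have IH := ih (R.erase w).card hcard' (R.erase w) rfl hcl' hut'
    have hU : ∀ (a : ∀ v : V, val v) (x : val w),
        ∑ u ∈ C.util, P.uval u (Function.update a w x u) = ∑ u ∈ C.util, P.uval u (a u) := by
      intro a x
      refine Finset.sum_congr rfl fun u hu => ?_
      rw [Function.update_of_ne (by rintro rfl; exact hwnu hu) _ _]
    have hProd : ∀ (a : ∀ v : V, val v) (x : val w),
        ∏ v ∈ Finset.univ.erase C.dec \ R, P.cpt v (Function.update a w x)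
          = ∏ v ∈ Finset.univ.erase C.dec \ R, P.cpt v a := by
      intro a x
      refine Finset.prod_congr rfl fun v hv => ?_
      rw [Finset.mem_sdiff, Finset.mem_erase] at hv
      refine P.cpt_local v hv.1.1 _ _ ?_ ?_
      · exact Function.update_of_ne (by rintro rfl; exact hv.2 hwR) _ _
      · intro u hE
        exact Function.update_of_ne (by rintro rfl; exact hv.2 (hwch v hE)) _ _
    by_cases hwd : w = C.dec
    · subst hwd
      have hdecR' : C.dec ∉ R.erase C.dec := Finset.notMem_erase _ _
      have hsd : Finset.univ.erase C.dec \ R.erase C.dec = Finset.univ.erase C.dec \ R := by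
        ext x
        simp only [Finset.mem_sdiff, Finset.mem_erase, Finset.mem_univ, and_true, true_and]
        tauto
      rw [IH, hsd]
      simp only [if_neg hdecR', if_pos hwR]
      have hmarg := marginalize C.dec
        (fun a => (∏ v ∈ Finset.univ.erase C.dec \ R, P.cpt v a) * ∑ u ∈ C.util, P.uval u (a u))
        π.p
        (fun a x => by simp only [hProd, hU])
        π.sum
      have hre : ∑ a : ∀ v : V, val v, (π.p a * ∏ v ∈ Finset.univ.erase C.dec \ R, P.cpt v a) *
            ∑ u ∈ C.util, P.uval u (a u)
          = ∑ a : ∀ v : V, val v,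
            ((∏ v ∈ Finset.univ.erase C.dec \ R, P.cpt v a) * ∑ u ∈ C.util, P.uval u (a u)) *
              π.p a := Finset.sum_congr rfl fun a _ => by ring
      rw [hre, hmarg]
      rw [← Finset.mul_prod_erase R _ hwR, mul_inv]
      simp only [one_mul]
      ring
    · have hdecR : (C.dec ∈ R.erase w) ↔ (C.dec ∈ R) := by
        rw [Finset.mem_erase]
        exact and_iff_right (fun hh : C.dec = w => hwd hh.symm)
      have hwRne : w ∉ Finset.univ.erase C.dec \ R := by
        simp [Finset.mem_sdiff, hwR]
      have hsd : Finset.univ.erase C.dec \ R.erase w = insert w (Finset.univ.erase C.dec \ R) := by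
        ext x
        simp only [Finset.mem_sdiff, Finset.mem_erase, Finset.mem_univ, and_true, true_and,
          Finset.mem_insert]
        constructor
        · rintro ⟨hx, hx2⟩
          by_cases hxw : x = w
          · exact Or.inl hxw
          · exact Or.inr ⟨hx, fun hxR => hx2 ⟨hxw, hxR⟩⟩
        · rintro (rfl | ⟨hx, hx2⟩)
          · exact ⟨hwd, fun h => h.1 rfl⟩
          · exact ⟨hx, fun h => hx2 h.2⟩
      rw [IH, hsd]
      have hre : ∑ a : ∀ v : V, val v,
            ((if C.dec ∈ R.erase w then 1 else π.p a) *
              ∏ v ∈ insert w (Finset.univ.erase C.dec \ R), P.cpt v a) *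
            ∑ u ∈ C.util, P.uval u (a u)
          = ∑ a : ∀ v : V, val v,
            (((if C.dec ∈ R then 1 else π.p a) *
              ∏ v ∈ Finset.univ.erase C.dec \ R, P.cpt v a) *
              ∑ u ∈ C.util, P.uval u (a u)) * P.cpt w a := by
        refine Finset.sum_congr rfl fun a _ => ?_
        rw [Finset.prod_insert hwRne]
        by_cases hd : C.dec ∈ R
        · rw [if_pos hd, if_pos (hdecR.2 hd)]; ring
        · rw [if_neg hd, if_neg (fun h => hd (hdecR.1 h))]; ring
      have hpind : ∀ (a : ∀ v : V, val v) (x : val w),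
          (if C.dec ∈ R then (1:ℝ) else π.p (Function.update a w x))
            = (if C.dec ∈ R then 1 else π.p a) := by
        intro a x
        by_cases hd : C.dec ∈ R
        · simp [hd]
        · rw [if_neg hd, if_neg hd]
          refine π.depends _ _ ?_ ?_
          · exact Function.update_of_ne (by rintro rfl; exact hd hwR) _ _
          · intro u hu
            exact Function.update_of_ne (by rintro rfl; exact hd (hwch C.dec hu)) _ _
      have hmarg := marginalize w
        (fun a => ((if C.dec ∈ R then 1 else π.p a) *
            ∏ v ∈ Finset.univ.erase C.dec \ R, P.cpt v a) * ∑ u ∈ C.util, P.uval u (a u))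
        (P.cpt w)
        (fun a x => by simp only [hProd, hU, hpind])
        (P.cpt_sum w hwd)
      rw [hre, hmarg]
      rw [← Finset.mul_prod_erase R _ hwR, mul_inv]
      ring

/-- If there is no directed path from a non-decision node `X` to any utility node, then
for every parameterization, no soft intervention on `X` (replacing the conditional
distribution of `X` only, i.e. passing to a parameterization `P'` agreeing with `P`
everywhere except possibly at `X`) can change the expected utility of any policy;
hence there is no intervention incentive for `X`. -/
theorem stmt9 {V : Type} [Fintype V] [DecidableEq V] (C : CID V) (X : V)
    (hX : X ≠ C.dec)
    (hnopath : ¬ ∃ u ∈ C.util, Relation.ReflTransGen C.E X u)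
    (val : V → Type) [∀ v, Fintype (val v)] (P P' : C.Param val)
    (hagree : ∀ v, v ≠ X → P.cpt v = P'.cpt v) (huval : P.uval = P'.uval) :
    ∀ π : C.Pol val C.Pa, C.value P π.p = C.value P' π.p := by
  classical
  intro π
  set R : Finset V := Finset.univ.filter (fun v => Relation.ReflTransGen C.E X v) with hR
  have hmemR : ∀ v, v ∈ R ↔ Relation.ReflTransGen C.E X v := by
    intro v; simp [hR]
  have hcl : ∀ w ∈ R, ∀ v, C.E w v → v ∈ R := by
    intro w hw v hE
    exact (hmemR v).2 (((hmemR w).1 hw).tail hE)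
  have hut : ∀ w ∈ R, w ∉ C.util := by
    intro w hw hwu
    exact hnopath ⟨w, hwu, (hmemR w).1 hw⟩
  rw [reduce C P π R.card R rfl hcl hut, reduce C P' π R.card R rfl hcl hut]
  congr 1
  refine Finset.sum_congr rfl fun a _ => ?_
  rw [huval]
  congr 2
  refine Finset.prod_congr rfl fun v hv => ?_
  have hvX : v ≠ X := by
    rintro rfl
    rw [Finset.mem_sdiff] at hv
    exact hv.2 ((hmemR v).2 Relation.ReflTransGen.refl)
  rw [hagree v hvX]
end

section
/- In a single-decision CID graph, if a non-decision node X has a directed path to a utility node that does not pass through the decision D, then there exists a parameterization and a soft intervention on X such that the maximal expected utility under the intervention strictly exceeds the maximal expected utility without it. -/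
lemma chain'_getElem_transGen {V : Type} {E : V → V → Prop} {L : List V} (hc : L.Chain' E) :
    ∀ (i j : ℕ), (hij : i < j) → (hj : j < L.length) →
      Relation.TransGen E (L[i]'(by omega)) (L[j]'hj) := by
  intro i j
  induction j with
  | zero => omega
  | succ k ih =>
    intro hij hj
    have hE : E (L.get ⟨k, by omega⟩) (L.get ⟨k+1, by omega⟩) :=
      List.isChain_iff_getElem.mp hc k (by omega)
    simp only [List.get_eq_getElem] at hE
    rcases Nat.lt_or_ge i k with h | h
    · exact (ih h (by omega)).tail hE
    · have : i = k := by omega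
      subst this
      exact Relation.TransGen.single hE

lemma chain'_nodup {V : Type} {E : V → V → Prop} {L : List V} (hc : L.Chain' E)
    (hac : ∀ v, ¬ Relation.TransGen E v v) : L.Nodup := by
  rw [List.nodup_iff_injective_get]
  rintro ⟨i, hi⟩ ⟨j, hj⟩ h
  simp only [List.get_eq_getElem] at h
  by_contra hne
  have hij : i ≠ j := by simpa using hne
  rcases Nat.lt_or_ge i j with hlt | hge
  · have t := chain'_getElem_transGen hc i j hlt hj
    rw [h] at t; exact hac _ t
  · have t := chain'_getElem_transGen hc j i (by omega) hi
    rw [← h] at t; exact hac _ t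

/-- The CPT used in the construction: `X` is deterministic with value `b`, nodes in
`T` copy the value of their predecessor on the path `X :: T`, all other nodes are
uniform. -/
noncomputable def cptf {V : Type} [DecidableEq V] (X : V) (T : List V) (b : Bool)
    (v : V) (a : ∀ _ : V, Bool) : ℝ :=
  if v = X then (if a X = b then 1 else 0)
  else if v ∈ T then (if a v = a ((X :: T).getD (List.idxOf v T) X) then 1 else 0)
  else 1/2

/-- Utility: `1` iff the node `u0` takes value `true`. -/
noncomputable def uvalf {V : Type} [DecidableEq V] (u0 : V) (v : V) (y : Bool) : ℝ :=
  if v = u0 then (if y then 1 else 0) else 0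
/-- The uniform policy. -/
noncomputable def unifPol {V : Type} [Fintype V] [DecidableEq V] (C : CID V) :
    C.Pol (fun _ => Bool) C.Pa :=
  ⟨fun _ => 1/2, fun _ => by norm_num, fun _ _ _ _ => rfl,
    fun a => by rw [Fintype.sum_bool]; norm_num⟩

/-- Intervention incentive, direct-control direction: if a non-decision node `X` has a
directed path to a utility node that does not pass through the decision `D`, then there
is a parameterization `P` and a soft intervention on `X` (a parameterization `P'`
agreeing with `P` everywhere except at `X`) such that the maximal expected utility under
the intervention strictly exceeds the maximal expected utility without it. -/
theorem stmt10 {V : Type} [Fintype V] [DecidableEq V] (C : CID V) (X : V)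
    (hX : X ≠ C.dec)
    (hpath : ∃ u ∈ C.util, DirPathAvoiding C.E X u C.dec) :
    ∃ (val : V → Type) (inst : ∀ v, Fintype (val v)),
      letI := inst
      ∃ P P' : C.Param val,
        (∀ v, v ≠ X → P.cpt v = P'.cpt v) ∧ P.uval = P'.uval ∧
        (⨆ π : C.Pol val C.Pa, C.value P π.p) < ⨆ π : C.Pol val C.Pa, C.value P' π.p := by
  obtain ⟨u0, hu0, L0, hLne, hhead, hlast, hchain, hdecL⟩ := hpath
  obtain ⟨T, rfl⟩ : ∃ T, L0 = X :: T := by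
    cases L0 with
    | nil => exact absurd rfl hLne
    | cons a T =>
      refine ⟨T, ?_⟩
      have : a = X := by simpa using hhead
      rw [this]
  have hnodup : (X :: T).Nodup := chain'_nodup hchain C.acyclic
  have hXT : X ∉ T := (List.nodup_cons.mp hnodup).1
  have hTnd : T.Nodup := (List.nodup_cons.mp hnodup).2
  have hu0mem : u0 ∈ X :: T := by
    have h1 : (X :: T).getLast? = some ((X :: T).getLast (by simp)) :=
      List.getLast?_eq_getLast (by simp)
    rw [h1] at hlast
    have := List.getLast_mem (l := X :: T) (by simp)
    rwa [Option.some_inj.mp hlast] at this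
  have hu0dec : u0 ≠ C.dec := fun h => C.dec_not_util (h ▸ hu0)
  -- structural facts about predecessors on the path
  have hpredE : ∀ v ∈ T, C.E ((X :: T).getD (List.idxOf v T) X) v ∧
      (X :: T).getD (List.idxOf v T) X ≠ v := by
    intro v hv
    have hjlt : List.idxOf v T < T.length := List.idxOf_lt_length_iff.mpr hv
    have hTj : T[List.idxOf v T] = v := List.getElem_idxOf hjlt
    have hjL : List.idxOf v T < (X :: T).length := by simp; omega
    have hpv : (X :: T).getD (List.idxOf v T) X = (X :: T)[List.idxOf v T] :=
      List.getD_eq_getElem _ _ hjL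
    have hE : C.E ((X :: T)[List.idxOf v T]) ((X :: T)[List.idxOf v T + 1]'(by simp; omega)) := by
      have := List.isChain_iff_getElem.mp hchain (List.idxOf v T) (by simp; omega)
      simpa using this
    have h2 : (X :: T)[List.idxOf v T + 1]'(by simp; omega) = v := by
      rw [List.getElem_cons_succ]; exact hTj
    rw [h2] at hE
    rw [hpv]
    refine ⟨hE, fun hne => ?_⟩
    rw [hne] at hE
    exact C.acyclic v (Relation.TransGen.single hE)
  -- cpt properties
  have hnn : ∀ b v a, 0 ≤ cptf X T b v a := by
    intro b v a
    unfold cptf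
    split_ifs <;> norm_num
  have hlocal : ∀ b v, v ≠ C.dec → ∀ a c, a v = c v → (∀ u, C.E u v → a u = c u) →
      cptf X T b v a = cptf X T b v c := by
    intro b v _ a c hvv hpar
    unfold cptf
    by_cases hvX : v = X
    · rw [if_pos hvX, if_pos hvX]
      have hXX : a X = c X := by rw [← hvX]; exact hvv
      rw [hXX]
    · rw [if_neg hvX, if_neg hvX]
      by_cases hvT : v ∈ T
      · obtain ⟨hE, _⟩ := hpredE v hvT
        rw [if_pos hvT, if_pos hvT, hvv, hpar _ hE]
      · rw [if_neg hvT, if_neg hvT]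
  have hsum : ∀ b v, v ≠ C.dec → ∀ a : ∀ _ : V, Bool,
      ∑ x : Bool, cptf X T b v (Function.update a v x) = 1 := by
    intro b v _ a
    by_cases hvX : v = X
    · have hx : ∀ x, cptf X T b v (Function.update a v x) = if x = b then 1 else 0 := by
        intro x
        unfold cptf
        rw [if_pos hvX, hvX, Function.update_self]
      rw [Fintype.sum_bool, hx, hx]
      cases b <;> norm_num
    · by_cases hvT : v ∈ T
      · obtain ⟨hE, hne⟩ := hpredE v hvT
        have hx : ∀ x, cptf X T b v (Function.update a v x) =
            if x = a ((X :: T).getD (List.idxOf v T) X) then 1 else 0 := by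
          intro x
          unfold cptf
          rw [if_neg hvX, if_pos hvT, Function.update_self, Function.update_of_ne hne]
        rw [Fintype.sum_bool, hx, hx]
        cases a ((X :: T).getD (List.idxOf v T) X) <;> norm_num
      · have hx : ∀ x, cptf X T b v (Function.update a v x) = 1/2 := by
          intro x; unfold cptf; rw [if_neg hvX, if_neg hvT]
        rw [Fintype.sum_bool, hx, hx]; norm_num
  refine ⟨fun _ => Bool, fun _ => inferInstance,
    ⟨cptf X T false, hnn false, hlocal false, hsum false, uvalf u0⟩,
    ⟨cptf X T true, hnn true, hlocal true, hsum true, uvalf u0⟩,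
    ?_, rfl, ?_⟩
  · intro v hv
    funext a
    show cptf X T false v a = cptf X T true v a
    unfold cptf
    rw [if_neg hv, if_neg hv]
  -- the main inequality
  have hU : ∀ a : ∀ _ : V, Bool, (∑ u ∈ C.util, uvalf u0 u (a u)) = if a u0 then 1 else 0 := by
    intro a
    rw [Finset.sum_eq_single u0]
    · simp [uvalf]
    · intro u _ hne; simp [uvalf, hne]
    · intro h; exact absurd hu0 h
  -- all-false propagation for the non-intervened parameterization
  have hallfalse : ∀ (a : ∀ _ : V, Bool), (∀ v ∈ X :: T, cptf X T false v a ≠ 0) →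
      ∀ v ∈ X :: T, a v = false := by
    intro a h
    have key : ∀ i, ∀ (hi : i < (X :: T).length), a ((X :: T)[i]) = false := by
      intro i
      induction i using Nat.strong_induction_on with
      | _ i ih =>
        intro hi
        by_cases hiX : (X :: T)[i] = X
        · rw [hiX]
          have h0 := h X (List.mem_cons_self)
          unfold cptf at h0
          rw [if_pos rfl] at h0
          split_ifs at h0 with hc
          · exact hc
          · exact absurd rfl h0
        · have hi0 : i ≠ 0 := by
            intro h0; subst h0; simp at hiX
          obtain ⟨j, rfl⟩ : ∃ j, i = j + 1 := ⟨i - 1, by omega⟩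
          have hjT : j < T.length := by simpa using hi
          have hv : (X :: T)[j+1] = T[j] := List.getElem_cons_succ _ _ _ _
          have hvT : T[j] ∈ T := List.getElem_mem _
          have hvX : T[j] ≠ X := by rw [← hv]; exact hiX
          have h0 := h (T[j]) (List.mem_cons_of_mem _ hvT)
          unfold cptf at h0
          rw [if_neg hvX, if_pos hvT] at h0
          have hidx : List.idxOf (T[j]) T = j := List.Nodup.idxOf_getElem hTnd j hjT
          have hpv : (X :: T).getD (List.idxOf (T[j]) T) X = (X :: T)[j]'(by simp; omega) := by
            rw [List.getD_eq_getElem _ _ (by rw [hidx]; simp; omega)]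
            simp only [hidx]
          rw [hpv] at h0
          split_ifs at h0 with hc
          · rw [hv, hc]
            exact ih j (by omega) (by simp; omega)
          · exact absurd rfl h0
    intro v hv
    obtain ⟨i, hi, rfl⟩ := List.mem_iff_getElem.mp hv
    exact key i hi
  have hterm0 : ∀ (q : (∀ _ : V, Bool) → ℝ) (a : ∀ _ : V, Bool),
      (q a * ∏ v ∈ Finset.univ.erase C.dec, cptf X T false v a) *
        (∑ u ∈ C.util, uvalf u0 u (a u)) = 0 := by
    intro q a
    by_cases hau : a u0 = true
    · have : ∃ v ∈ X :: T, cptf X T false v a = 0 := by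
        by_contra hcon
        push_neg at hcon
        have := hallfalse a hcon u0 hu0mem
        rw [hau] at this
        simp at this
      obtain ⟨v, hvL, hv0⟩ := this
      have hvd : v ≠ C.dec := fun h => hdecL (h ▸ hvL)
      have hz : (∏ v ∈ Finset.univ.erase C.dec, cptf X T false v a) = 0 :=
        Finset.prod_eq_zero (Finset.mem_erase.mpr ⟨hvd, Finset.mem_univ v⟩) hv0
      rw [hz]; ring
    · have : (∑ u ∈ C.util, uvalf u0 u (a u)) = 0 := by
        rw [hU]; simp [hau]
      rw [this]; ring
  -- the value under P is zero for every policy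
  have hvalP : ∀ π : C.Pol (fun _ => Bool) C.Pa,
      C.value ⟨cptf X T false, hnn false, hlocal false, hsum false, uvalf u0⟩ π.p = 0 := by
    intro π
    unfold CID.value
    exact Finset.sum_eq_zero fun a _ => hterm0 π.p a
  -- uniform policy
  haveI : Nonempty (C.Pol (fun _ => Bool) C.Pa) := ⟨unifPol C⟩
  -- policies are bounded by 1
  have hppi : ∀ (π : C.Pol (fun _ => Bool) C.Pa) (a : ∀ _ : V, Bool), π.p a ≤ 1 := by
    intro π a
    have hs := π.sum a
    have hle : π.p (Function.update a C.dec (a C.dec)) ≤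
        ∑ d : Bool, π.p (Function.update a C.dec d) :=
      Finset.single_le_sum (fun i _ => π.nonneg _) (Finset.mem_univ _)
    rw [Function.update_eq_self] at hle
    rw [hs] at hle
    exact hle
  -- value under P' is bounded
  have hB : ∀ π : C.Pol (fun _ => Bool) C.Pa,
      C.value ⟨cptf X T true, hnn true, hlocal true, hsum true, uvalf u0⟩ π.p ≤
      ∑ a : ∀ _ : V, Bool, (∏ v ∈ Finset.univ.erase C.dec, cptf X T true v a) *
        (∑ u ∈ C.util, uvalf u0 u (a u)) := by
    intro π
    unfold CID.value
    apply Finset.sum_le_sum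
    intro a _
    have h1 : 0 ≤ ∏ v ∈ Finset.univ.erase C.dec, cptf X T true v a :=
      Finset.prod_nonneg fun v _ => hnn true v a
    have h2 : 0 ≤ ∑ u ∈ C.util, uvalf u0 u (a u) := by
      rw [hU]; split_ifs <;> norm_num
    calc (π.p a * ∏ v ∈ Finset.univ.erase C.dec, cptf X T true v a) *
          (∑ u ∈ C.util, uvalf u0 u (a u))
        ≤ (1 * ∏ v ∈ Finset.univ.erase C.dec, cptf X T true v a) *
          (∑ u ∈ C.util, uvalf u0 u (a u)) := by
          apply mul_le_mul_of_nonneg_right _ h2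
          exact mul_le_mul_of_nonneg_right (hppi π a) h1
      _ = (∏ v ∈ Finset.univ.erase C.dec, cptf X T true v a) *
          (∑ u ∈ C.util, uvalf u0 u (a u)) := by ring
  have hbdd : BddAbove (Set.range fun π : C.Pol (fun _ => Bool) C.Pa =>
      C.value ⟨cptf X T true, hnn true, hlocal true, hsum true, uvalf u0⟩ π.p) := by
    refine ⟨∑ a : ∀ _ : V, Bool, (∏ v ∈ Finset.univ.erase C.dec, cptf X T true v a) *
      (∑ u ∈ C.util, uvalf u0 u (a u)), ?_⟩
    rintro x ⟨π, rfl⟩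
    exact hB π
  -- the value under P' with the uniform policy is positive
  have hpos : 0 < C.value ⟨cptf X T true, hnn true, hlocal true, hsum true, uvalf u0⟩ (unifPol C).p := by
    unfold CID.value
    apply Finset.sum_pos'
    · intro a _
      have h1 : 0 ≤ ∏ v ∈ Finset.univ.erase C.dec, cptf X T true v a :=
        Finset.prod_nonneg fun v _ => hnn true v a
      have h2 : 0 ≤ ∑ u ∈ C.util, uvalf u0 u (a u) := by
        rw [hU]; split_ifs <;> norm_num
      exact mul_nonneg (mul_nonneg ((unifPol C).nonneg a) h1) h2
    · refine ⟨fun _ => true, Finset.mem_univ _, ?_⟩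
      have hprod : 0 < ∏ v ∈ Finset.univ.erase C.dec, cptf X T true v (fun _ => true) := by
        apply Finset.prod_pos
        intro v _
        unfold cptf
        split_ifs with h1 h2 h3 h4
        · norm_num
        · exact absurd rfl h2
        · norm_num
        · exact absurd rfl h4
        · norm_num
      have hUa : (∑ u ∈ C.util, uvalf u0 u ((fun _ : V => true) u)) = 1 := by
        rw [hU]; norm_num
      have hp0 : (unifPol C).p (fun _ => true) = 1/2 := rfl
      rw [hUa, hp0, mul_one]
      positivity
  -- conclude
  have hsupP : (⨆ π : C.Pol (fun _ => Bool) C.Pa,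
      C.value ⟨cptf X T false, hnn false, hlocal false, hsum false, uvalf u0⟩ π.p) = 0 := by
    have : (fun π : C.Pol (fun _ => Bool) C.Pa =>
        C.value ⟨cptf X T false, hnn false, hlocal false, hsum false, uvalf u0⟩ π.p) =
        fun _ => (0 : ℝ) := funext hvalP
    rw [this]
    exact ciSup_const
  rw [hsupP]
  exact lt_of_lt_of_le hpos (le_ciSup hbdd (unifPol C))
end

section
/- In a single-decision CID graph, the requisite observations and nonrequisite observations partition Pa_D, and a node X with a directed path to a utility node in the reduced graph G* either has a directed path to a utility node avoiding D (direct intervention incentive), or every such directed path passes through D; in the latter case X is an ancestor of some requisite observation of D. -/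
theorem aux_path {V : Type} (C : CID V) {X u : V}
    (h : Relation.ReflTransGen C.Ered X u) (hX : X ≠ C.dec) :
    DirPathAvoiding C.Ered X u C.dec ∨
      ∃ O, C.Requisite O ∧ Relation.ReflTransGen C.Ered X O := by
  revert hX
  induction h using Relation.ReflTransGen.head_induction_on with
  | refl =>
    intro hX
    exact Or.inl ⟨[u], by simp, rfl, rfl, List.isChain_singleton u,
      by simpa using fun h => hX h.symm⟩
  | @head x y hxy _h ih =>
    intro hX
    by_cases hy : y = C.dec
    · subst hy
      exact Or.inr ⟨x, hxy.2 rfl, Relation.ReflTransGen.refl⟩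
    · rcases ih hy with ⟨p, hne, hhd, hlast, hch, hd⟩ | ⟨O, hO, hr⟩
      · cases p with
        | nil => exact absurd rfl hne
        | cons a t =>
          simp only [List.head?_cons, Option.some_inj] at hhd
          subst hhd
          refine Or.inl ⟨x :: a :: t, by simp, rfl, ?_, ?_, ?_⟩
          · rwa [List.getLast?_cons_cons]
          · exact List.isChain_cons_cons.2 ⟨hxy, hch⟩
          · simp only [List.mem_cons, not_or]
            refine ⟨fun h => hX h.symm, ?_⟩
            simpa using hd
      · exact Or.inr ⟨O, hO, Relation.ReflTransGen.head hxy hr⟩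

/-- The requisite and nonrequisite observations partition `Pa_D`; and a non-decision node
`X` with a directed path to a utility node in the reduced graph `G*` either has a directed
path to a utility node avoiding `D` (direct intervention incentive), or every such path
passes through `D`, in which case `X` is an ancestor of some requisite observation of `D`. -/
theorem stmt11 {V : Type} (C : CID V) :
    (C.Pa = {O | C.Requisite O} ∪ {O | C.Nonrequisite O} ∧
      {O | C.Requisite O} ∩ {O | C.Nonrequisite O} = ∅) ∧
    (∀ X : V, X ≠ C.dec → (∃ u ∈ C.util, Relation.ReflTransGen C.Ered X u) →
      (∃ u ∈ C.util, DirPathAvoiding C.Ered X u C.dec) ∨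
      ((¬ ∃ u ∈ C.util, DirPathAvoiding C.Ered X u C.dec) ∧
        ∃ O, C.Requisite O ∧ Relation.ReflTransGen C.Ered X O)) := by
  constructor
  · constructor
    · ext x
      simp only [Set.mem_union, Set.mem_setOf_eq]
      constructor
      · intro hx
        by_cases h : C.Requisite x
        · exact Or.inl h
        · exact Or.inr ⟨hx, h⟩
      · rintro (h | h)
        · exact h.1
        · exact h.1
    · ext x
      simp only [Set.mem_inter_iff, Set.mem_setOf_eq, Set.mem_empty_iff_false, iff_false,
        not_and]
      intro h h'
      exact h'.2 h
  · intro X hX ⟨u, hu, hpath⟩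
    by_cases hdir : ∃ u ∈ C.util, DirPathAvoiding C.Ered X u C.dec
    · exact Or.inl hdir
    · refine Or.inr ⟨hdir, ?_⟩
      rcases aux_path C hpath hX with h | h
      · exact absurd ⟨u, hu, h⟩ hdir
      · exact h
end

section
/- If X is a requisite observation of the decision D in a single-decision CID graph (i.e., X ∈ Pa_D and X is d-connected to a utility node descending from D given {D} ∪ Pa_D \ {X}), then there exists a 'supporting pair of paths': a directed path from D to some utility node U, and an undirected path from X to the same U not passing through D that is active when conditioning on {D} ∪ Pa_D \ {X}. -/
lemma DAG.activePath_tail {V : Type} (G : DAG V) (Z : Set V) (x : V) (q : List V)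
    (h : G.ActivePath Z (x :: q)) : G.ActivePath Z q := by
  match q with
  | [] => trivial
  | [_] => trivial
  | y :: z :: rest => exact h.2

lemma DAG.activePath_suffix {V : Type} (G : DAG V) (Z : Set V) :
    ∀ (l q : List V), G.ActivePath Z (l ++ q) → G.ActivePath Z q := by
  intro l
  induction l with
  | nil => intro q h; exact h
  | cons x l ih => intro q h; exact ih q (G.activePath_tail Z x (l ++ q) h)

/-- Existence of a supporting pair of paths: if `X` is a requisite observation of the
decision `D` (i.e. `X ∈ Pa_D` and `X` is d-connected to a utility node descending from
`D` given `{D} ∪ Pa_D \ {X}`), then there is a utility node `U` with a directed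
(frontdoor) path from `D` to `U` and an undirected (backdoor) path from `X` to the same
`U` that does not pass through `D` and is active when conditioning on
`{D} ∪ Pa_D \ {X}`. -/
theorem stmt12 {V : Type} (C : CID V) (X : V) (hreq : C.Requisite X) :
    ∃ u ∈ C.util, Relation.ReflTransGen C.E C.dec u ∧
      ∃ p : List V, p.Nodup ∧ C.toDAG.IsUPath p ∧ p.head? = some X ∧
        p.getLast? = some u ∧ C.dec ∉ p ∧
        C.toDAG.ActivePath ({C.dec} ∪ (C.Pa \ {X})) p := by
  obtain ⟨hXPa, u, hu, hdu, p, hnd, hup, hhd, hlast, hact⟩ := hreq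
  refine ⟨u, hu, hdu, p, hnd, hup, hhd, hlast, ?_, hact⟩
  set Z : Set V := {C.dec} ∪ (C.Pa \ {X}) with hZ
  intro hD
  -- D ≠ X
  have hXD : C.E X C.dec := hXPa
  have hDX : C.dec ≠ X := by
    intro h
    rw [h] at hXD
    exact C.acyclic X (Relation.TransGen.single hXD)
  -- D ≠ u
  have hDu : C.dec ≠ u := fun h => C.dec_not_util (h ▸ hu)
  -- p = X :: t
  obtain ⟨t, rfl⟩ : ∃ t, p = X :: t := by
    cases p with
    | nil => simp at hhd
    | cons x t =>
      have : x = X := by simpa using hhd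
      exact ⟨t, by rw [this]⟩
  have hDt : C.dec ∈ t := by
    rcases List.mem_cons.mp hD with h | h
    · exact absurd h hDX
    · exact h
  have hXnot : X ∉ t := (List.nodup_cons.mp hnd).1
  obtain ⟨l, r, ht⟩ := List.append_of_mem hDt
  subst ht
  -- write X :: l as l₂ ++ [a]
  obtain ⟨l₂, a, hl⟩ : ∃ l₂ a, X :: l = l₂ ++ [a] :=
    ⟨(X :: l).dropLast, (X :: l).getLast (List.cons_ne_nil _ _),
      (List.dropLast_append_getLast (List.cons_ne_nil _ _)).symm⟩
  have hp : X :: (l ++ C.dec :: r) = l₂ ++ a :: C.dec :: r := by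
    rw [← List.cons_append, hl]; simp
  -- r ≠ []
  obtain ⟨b, r', rfl⟩ : ∃ b r', r = b :: r' := by
    cases r with
    | nil =>
        exfalso
        apply hDu
        have : (X :: (l ++ [C.dec])).getLast? = some C.dec := by
          rw [← List.cons_append, List.getLast?_append]
          simp
        rw [this] at hlast
        exact (Option.some_injective _ hlast)
    | cons b r' => exact ⟨b, r', rfl⟩
  -- active suffix a :: D :: b :: r'
  have hsuf : C.toDAG.ActivePath Z (a :: C.dec :: b :: r') := by
    have := hact
    rw [hp] at this
    exact C.toDAG.activePath_suffix Z l₂ _ this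
  -- triple (a, D, b) is active; since D ∈ Z, it's a collider: E b D
  have htri : C.toDAG.ActiveTriple Z a C.dec b := hsuf.1
  have hbD : C.E b C.dec := by
    rcases htri with ⟨_, h2, _⟩ | ⟨_, hnz⟩
    · exact h2
    · exact absurd (by simp [hZ] : C.dec ∈ Z) hnz
  -- b ∈ Z
  have hbX : b ≠ X := by
    intro h
    exact hXnot (h ▸ (by simp : b ∈ l ++ C.dec :: b :: r'))
  have hbZ : b ∈ Z := Or.inr ⟨hbD, hbX⟩
  cases r' with
  | nil =>
      -- b = u, so E u D and D ⟶* u : cycle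
      have hbu : b = u := by
        have : (X :: (l ++ [C.dec, b])).getLast? = some b := by
          rw [← List.cons_append, List.getLast?_append]
          simp
        rw [this] at hlast
        exact Option.some_injective _ hlast
      subst hbu
      exact C.acyclic C.dec (Relation.TransGen.tail' hdu hbD)
  | cons c r'' =>
      have htri2 : C.toDAG.ActiveTriple Z C.dec b c := hsuf.2.1
      rcases htri2 with ⟨h1, _, _⟩ | ⟨_, hnz⟩
      · exact C.acyclic C.dec (Relation.TransGen.head h1 (Relation.TransGen.single hbD))
      · exact hnz hbZ
end

section
/- In a Bayesian network, changing the conditional probability distribution of a node X (a soft intervention) leaves the joint marginal distribution over any set of nodes W unchanged whenever X is not an ancestor of any node in W. -/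
/-- A Bayesian network over the DAG `G`: finite domains `val v` and conditional
probability tables for each node, depending only on the node's own value and its parents. -/
structure BN (V : Type) [Fintype V] [DecidableEq V] (G : DAG V)
    (val : V → Type) [∀ v, Fintype (val v)] where
  cpt : ∀ _v : V, (∀ u : V, val u) → ℝ
  cpt_nonneg : ∀ v a, 0 ≤ cpt v a
  cpt_local : ∀ v a b, a v = b v → (∀ u, G.E u v → a u = b u) → cpt v a = cpt v b
  cpt_sum : ∀ (v : V) (a : ∀ u : V, val u), ∑ x : val v, cpt v (Function.update a v x) = 1

namespace BN

variable {V : Type} [Fintype V] [DecidableEq V] {G : DAG V} {val : V → Type}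
  [∀ v, Fintype (val v)]

/-- The joint probability of a full assignment: the product of the conditionals. -/
noncomputable def joint (B : BN V G val) (a : ∀ v, val v) : ℝ :=
  ∏ v, B.cpt v a

open Classical in
/-- The probability of an event (a predicate on full assignments). -/
noncomputable def pr (B : BN V G val) (φ : (∀ v, val v) → Prop) : ℝ :=
  ∑ a : ∀ v, val v, if φ a then B.joint a else 0

theorem pr_congr (B B' : BN V G val) (h : B.cpt = B'.cpt) (φ : (∀ v, val v) → Prop) :
    B.pr φ = B'.pr φ := by
  unfold pr joint
  rw [h]

open Classical in
theorem pr_sink (B B' : BN V G val) (v : V) (W : Set V) (z : ∀ u, val u) (hvW : v ∉ W)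
    (hagree : ∀ u, u ≠ v → B.cpt u = B'.cpt u)
    (hsink : ∀ u, u ≠ v → ∀ a x, B.cpt u (Function.update a v x) = B.cpt u a) :
    B.pr (fun a => ∀ w ∈ W, a w = z w) = B'.pr (fun a => ∀ w ∈ W, a w = z w) := by
  classical
  have hsink' : ∀ u, u ≠ v → ∀ a x, B'.cpt u (Function.update a v x) = B'.cpt u a :=
    fun u hu a x => by rw [← hagree u hu]; exact hsink u hu a x
  set a₀ : (∀ j : {j // j ≠ v}, val j) → (∀ u, val u) :=
    fun g => (Equiv.piSplitAt v val).symm (z v, g) with ha₀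
  have hsymm : ∀ (x : val v) (g : ∀ j : {j // j ≠ v}, val j),
      (Equiv.piSplitAt v val).symm (x, g) = Function.update (a₀ g) v x := by
    intro x g
    funext j
    rcases eq_or_ne j v with rfl | h
    · simp [Equiv.piSplitAt, ha₀]
    · simp [Equiv.piSplitAt, ha₀, h, Function.update_of_ne h]
  have key : ∀ (C : BN V G val),
      (∀ u, u ≠ v → ∀ a x, C.cpt u (Function.update a v x) = C.cpt u a) →
      C.pr (fun a => ∀ w ∈ W, a w = z w)
        = ∑ g : ∀ j : {j // j ≠ v}, val j,
            (if ∀ w ∈ W, a₀ g w = z w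
             then ∏ u ∈ Finset.univ.erase v, C.cpt u (a₀ g) else 0) := by
    intro C hC
    have h1 : C.pr (fun a => ∀ w ∈ W, a w = z w)
        = ∑ p : val v × (∀ j : {j // j ≠ v}, val j),
            (if ∀ w ∈ W, ((Equiv.piSplitAt v val).symm p) w = z w
             then C.joint ((Equiv.piSplitAt v val).symm p) else 0) := by
      unfold pr
      refine Eq.trans ?_ (Equiv.sum_comp (Equiv.piSplitAt v val).symm
        (fun a => if ∀ w ∈ W, a w = z w then C.joint a else 0)).symm
      exact Finset.sum_congr rfl fun a _ => by congr
    rw [h1, Fintype.sum_prod_type, Finset.sum_comm]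
    refine Finset.sum_congr rfl fun g _ => ?_
    have hupd : ∀ (x : val v) (w), w ∈ W →
        (Function.update (a₀ g) v x w = z w ↔ a₀ g w = z w) := by
      intro x w hw
      rw [Function.update_of_ne (by rintro rfl; exact hvW hw)]
    by_cases hφ : ∀ w ∈ W, a₀ g w = z w
    · rw [if_pos hφ]
      have hterm : ∀ x : val v,
          (if ∀ w ∈ W, ((Equiv.piSplitAt v val).symm (x, g)) w = z w
           then C.joint ((Equiv.piSplitAt v val).symm (x, g)) else 0)
          = (∏ u ∈ Finset.univ.erase v, C.cpt u (a₀ g))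
              * C.cpt v (Function.update (a₀ g) v x) := by
        intro x
        rw [hsymm x g, if_pos (fun w hw => (hupd x w hw).mpr (hφ w hw))]
        unfold joint
        rw [← Finset.prod_erase_mul Finset.univ _ (Finset.mem_univ v)]
        congr 1
        exact Finset.prod_congr rfl fun u hu =>
          hC u (Finset.ne_of_mem_erase hu) (a₀ g) x
      rw [Finset.sum_congr rfl (fun x _ => hterm x), ← Finset.mul_sum,
        C.cpt_sum v (a₀ g), mul_one]
    · rw [if_neg hφ]
      refine Finset.sum_eq_zero fun x _ => ?_
      rw [hsymm x g, if_neg (fun h => hφ fun w hw => (hupd x w hw).mp (h w hw))]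
  rw [key B hsink, key B' hsink']
  refine Finset.sum_congr rfl fun g _ => ?_
  have hprod : (∏ u ∈ Finset.univ.erase v, B.cpt u (a₀ g))
      = ∏ u ∈ Finset.univ.erase v, B'.cpt u (a₀ g) :=
    Finset.prod_congr rfl fun u hu =>
      congrFun (hagree u (Finset.ne_of_mem_erase hu)) (a₀ g)
  rw [hprod]

theorem exists_minimal (G : DAG V) :
    ∀ S : Finset V, S.Nonempty → ∃ v ∈ S, ∀ u ∈ S, ¬ Relation.TransGen G.E u v := by
  classical
  intro S
  induction S using Finset.strongInductionOn with
  | _ S ih =>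
    rintro ⟨v, hv⟩
    set S' := S.filter (fun u => Relation.TransGen G.E u v) with hS'def
    by_cases h : S'.Nonempty
    · have hss : S' ⊂ S := by
        refine (Finset.ssubset_iff_of_subset (Finset.filter_subset _ _)).mpr ?_
        exact ⟨v, hv, fun hv' => G.acyclic v ((Finset.mem_filter.mp hv').2)⟩
      obtain ⟨w, hwS', hw⟩ := ih S' hss h
      obtain ⟨hwS, hwv⟩ := Finset.mem_filter.mp hwS'
      refine ⟨w, hwS, fun u hu htr => ?_⟩
      exact hw u (Finset.mem_filter.mpr ⟨hu, htr.trans hwv⟩) htr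
    · exact ⟨v, hv, fun u hu htr => h ⟨u, Finset.mem_filter.mpr ⟨hu, htr⟩⟩⟩

open Classical in
noncomputable def collapseSet (B : BN V G val) (z : ∀ v, val v) (S : Finset V) :
    BN V G val where
  cpt v a := if v ∈ S then (if a v = z v then 1 else 0) else B.cpt v a
  cpt_nonneg v a := by
    split_ifs
    · norm_num
    · norm_num
    · exact B.cpt_nonneg v a
  cpt_local v a b hab hpa := by
    by_cases h : v ∈ S
    · simp [h, hab]
    · simp only [h, if_false]
      exact B.cpt_local v a b hab hpa
  cpt_sum v a := by
    by_cases h : v ∈ S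
    · simp [h, Function.update_self, Finset.sum_ite_eq']
    · simp only [h, if_false]
      exact B.cpt_sum v a

open Classical in
theorem pr_collapse (B : BN V G val) (z : ∀ v, val v) (W : Set V) :
    ∀ S : Finset V, (∀ v ∈ S, ∀ u, G.E v u → u ∈ S) → (∀ v ∈ S, v ∉ W) →
    B.pr (fun a => ∀ w ∈ W, a w = z w)
      = (B.collapseSet z S).pr (fun a => ∀ w ∈ W, a w = z w) := by
  intro S
  induction S using Finset.strongInductionOn with
  | _ S ih =>
    intro hclosed hdisj
    rcases S.eq_empty_or_nonempty with rfl | hne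
    · exact pr_congr _ _ (by funext v a; simp [collapseSet]) _
    obtain ⟨v, hvS, hmin⟩ := exists_minimal G S hne
    have herase_closed : ∀ u ∈ S.erase v, ∀ w, G.E u w → w ∈ S.erase v := by
      intro u hu w hw
      have huS := Finset.mem_of_mem_erase hu
      refine Finset.mem_erase.mpr ⟨?_, hclosed u huS w hw⟩
      rintro rfl
      exact hmin u huS (Relation.TransGen.single hw)
    have h1 := ih (S.erase v) (Finset.erase_ssubset hvS) herase_closed
      (fun u hu => hdisj u (Finset.mem_of_mem_erase hu))
    rw [h1]
    apply pr_sink (B.collapseSet z (S.erase v)) (B.collapseSet z S) v W z (hdisj v hvS)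
    · intro u hu
      funext a
      simp only [collapseSet]
      exact if_congr (by simp [Finset.mem_erase, hu]) rfl rfl
    · intro u hu a x
      simp only [collapseSet]
      by_cases h : u ∈ S.erase v
      · simp [h, Function.update_of_ne hu]
      · rw [if_neg h, if_neg h]
        apply B.cpt_local
        · exact Function.update_of_ne hu _ _
        · intro w hw
          have hwv : w ≠ v := by
            rintro rfl
            exact h (Finset.mem_erase.mpr ⟨hu, hclosed w hvS u hw⟩)
          exact Function.update_of_ne hwv _ _

end BN

/-- Changing the conditional probability distribution of a node `X` of a Bayesian network
(a soft intervention, here: passing to a second network `B'` over the same DAG agreeing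
with `B` at every node other than `X`) leaves the joint marginal distribution over any
set of nodes `W` unchanged whenever `X` is not an ancestor (inclusive) of any node in `W`. -/
theorem stmt15 {V : Type} [Fintype V] [DecidableEq V] {G : DAG V} {val : V → Type}
    [∀ v, Fintype (val v)] (B B' : BN V G val) (X : V)
    (hagree : ∀ v, v ≠ X → B.cpt v = B'.cpt v)
    (W : Set V) (hW : ∀ w ∈ W, ¬ Relation.ReflTransGen G.E X w)
    (z : ∀ v, val v) :
    B.pr (fun a => ∀ w ∈ W, a w = z w) = B'.pr (fun a => ∀ w ∈ W, a w = z w) := by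
  classical
  set D : Finset V := Finset.univ.filter (fun v => Relation.ReflTransGen G.E X v) with hD
  have hmemD : ∀ v, v ∈ D ↔ Relation.ReflTransGen G.E X v := by
    intro v; simp [hD]
  have hclosed : ∀ v ∈ D, ∀ u, G.E v u → u ∈ D := by
    intro v hv u hu
    exact (hmemD u).mpr (((hmemD v).mp hv).tail hu)
  have hdisj : ∀ v ∈ D, v ∉ W := by
    intro v hv hvW
    exact hW v hvW ((hmemD v).mp hv)
  rw [B.pr_collapse z W D hclosed hdisj, B'.pr_collapse z W D hclosed hdisj]
  apply BN.pr_congr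
  funext v a
  simp only [BN.collapseSet]
  by_cases h : v ∈ D
  · simp [h]
  · have hvX : v ≠ X := by
      rintro rfl
      exact h ((hmemD v).mpr Relation.ReflTransGen.refl)
    simp only [h, if_false]
    exact congrFun (hagree v hvX) a
end

section
/- Let X, Z, and U be finite random variables on a Bayesian network such that X is conditionally independent of U given Z. Then for any function d of (X, Z) there is a function d' of Z alone such that E[f(d'(Z), Z, U)] ≥ E[f(d(X,Z), Z, U)] for any bounded real function f; i.e., decisions need not depend on variables conditionally independent of the payoff-relevant variable. -/
private lemma fiber_sum {Ω α : Type} [Fintype Ω] [DecidableEq α] (g : Ω → α) (F : Ω → α → ℝ) :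
    ∑ ω, F ω (g ω) = ∑ a ∈ Finset.univ.image g, ∑ ω, if g ω = a then F ω a else 0 := by
  rw [Finset.sum_comm]
  refine Finset.sum_congr rfl fun ω _ => ?_
  rw [Finset.sum_ite_eq, if_pos (Finset.mem_image_of_mem g (Finset.mem_univ ω))]

open Classical in
/-- On a finite probability space, let `X`, `Z`, `U` be random variables with `X`
conditionally independent of `U` given `Z`. Then for any decision rule `d` depending on
`(X, Z)` and any (bounded) real payoff function `f`, there is a decision rule `d'`
depending on `Z` alone doing at least as well:
`E[f(d'(Z), Z, U)] ≥ E[f(d(X, Z), Z, U)]`. -/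
theorem stmt17 {Ω 𝓧 𝓩 𝓤 𝓓 : Type} [Fintype Ω] [Nonempty 𝓓] [Fintype 𝓓]
    (p : Ω → ℝ) (hp : ∀ ω, 0 ≤ p ω) (hsum : ∑ ω, p ω = 1)
    (X : Ω → 𝓧) (Z : Ω → 𝓩) (U : Ω → 𝓤)
    (hCI : ∀ (x : 𝓧) (z : 𝓩) (u : 𝓤),
      0 < (∑ ω, if Z ω = z then p ω else 0) →
      (∑ ω, if X ω = x ∧ U ω = u ∧ Z ω = z then p ω else 0) *
          (∑ ω, if Z ω = z then p ω else 0) =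
        (∑ ω, if X ω = x ∧ Z ω = z then p ω else 0) *
          (∑ ω, if U ω = u ∧ Z ω = z then p ω else 0))
    (d : 𝓧 → 𝓩 → 𝓓) (f : 𝓓 → 𝓩 → 𝓤 → ℝ) :
    ∃ d' : 𝓩 → 𝓓,
      ∑ ω, p ω * f (d (X ω) (Z ω)) (Z ω) (U ω) ≤
        ∑ ω, p ω * f (d' (Z ω)) (Z ω) (U ω) := by
  classical
  -- conditional expected payoff of decision a given Z = z (unnormalized)
  set G : 𝓓 → 𝓩 → ℝ := fun a z => ∑ ω, if Z ω = z then p ω * f a z (U ω) else 0 with hGdef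
  have hex : ∀ z : 𝓩, ∃ a : 𝓓, ∀ b : 𝓓, G b z ≤ G a z := by
    intro z
    obtain ⟨a, -, ha⟩ := Finset.exists_max_image (Finset.univ : Finset 𝓓)
      (fun b => G b z) Finset.univ_nonempty
    exact ⟨a, fun b => ha b (Finset.mem_univ b)⟩
  choose d' hd' using hex
  refine ⟨d', ?_⟩
  set Pz : 𝓩 → ℝ := fun z => ∑ ω, if Z ω = z then p ω else 0 with hPzdef
  set Pxz : 𝓧 → 𝓩 → ℝ := fun x z => ∑ ω, if X ω = x ∧ Z ω = z then p ω else 0 with hPxzdef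
  set Puz : 𝓤 → 𝓩 → ℝ := fun u z => ∑ ω, if U ω = u ∧ Z ω = z then p ω else 0 with hPuzdef
  set Pxuz : 𝓧 → 𝓤 → 𝓩 → ℝ :=
    fun x u z => ∑ ω, if X ω = x ∧ U ω = u ∧ Z ω = z then p ω else 0 with hPxuzdef
  set T : 𝓧 → 𝓓 → 𝓩 → ℝ :=
    fun x a z => ∑ ω, if X ω = x ∧ Z ω = z then p ω * f a z (U ω) else 0 with hTdef
  -- group LHS by z then x
  have hL : (∑ ω, p ω * f (d (X ω) (Z ω)) (Z ω) (U ω)) =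
      ∑ z ∈ Finset.univ.image Z, ∑ x ∈ Finset.univ.image X, T x (d x z) z := by
    rw [fiber_sum Z fun ω z => p ω * f (d (X ω) z) z (U ω)]
    refine Finset.sum_congr rfl fun z _ => ?_
    rw [fiber_sum X fun ω x => if Z ω = z then p ω * f (d x z) z (U ω) else 0]
    refine Finset.sum_congr rfl fun x _ => Finset.sum_congr rfl fun ω _ => ?_
    by_cases h1 : X ω = x <;> by_cases h2 : Z ω = z <;> simp [h1, h2]
  -- group RHS by z
  have hR : (∑ ω, p ω * f (d' (Z ω)) (Z ω) (U ω)) =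
      ∑ z ∈ Finset.univ.image Z, G (d' z) z := by
    rw [fiber_sum Z fun ω z => p ω * f (d' z) z (U ω)]
  rw [hL, hR]
  refine Finset.sum_le_sum fun z _ => ?_
  -- basic positivity facts
  have hPznn : 0 ≤ Pz z := Finset.sum_nonneg fun ω _ => by
    split_ifs; exacts [hp ω, le_rfl]
  rcases eq_or_lt_of_le hPznn with hzero | hpos
  · -- P(Z = z) = 0 : everything vanishes
    have h0 : ∀ ω, Z ω = z → p ω = 0 := by
      intro ω hω
      have := (Finset.sum_eq_zero_iff_of_nonneg (fun ω _ => by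
        split_ifs; exacts [hp ω, le_rfl])).mp hzero.symm ω (Finset.mem_univ ω)
      simpa [hω] using this
    have hT0 : ∀ x a, T x a z = 0 := by
      intro x a
      refine Finset.sum_eq_zero fun ω _ => ?_
      by_cases h1 : X ω = x <;> by_cases h2 : Z ω = z <;> simp [h1, h2, h0 ω]
    have hG0 : G (d' z) z = 0 := by
      refine Finset.sum_eq_zero fun ω _ => ?_
      by_cases h2 : Z ω = z <;> simp [h2, h0 ω]
    rw [hG0]
    refine le_of_eq (Finset.sum_eq_zero fun x _ => hT0 x (d x z))
  · -- P(Z = z) > 0 : use conditional independence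
    -- group T by u
    have hT : ∀ x a, T x a z = ∑ u ∈ Finset.univ.image U, Pxuz x u z * f a z u := by
      intro x a
      have h := fiber_sum U fun ω u => if X ω = x ∧ Z ω = z then p ω * f a z u else 0
      rw [hTdef]; dsimp only
      rw [h]
      refine Finset.sum_congr rfl fun u _ => ?_
      rw [hPxuzdef]; dsimp only
      rw [Finset.sum_mul]
      refine Finset.sum_congr rfl fun ω _ => ?_
      by_cases h1 : X ω = x <;> by_cases h2 : U ω = u <;> by_cases h3 : Z ω = z <;>
        simp [h1, h2, h3]
    -- group G by u
    have hG : ∀ a, G a z = ∑ u ∈ Finset.univ.image U, Puz u z * f a z u := by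
      intro a
      have h := fiber_sum U fun ω u => if Z ω = z then p ω * f a z u else 0
      rw [hGdef]; dsimp only
      rw [h]
      refine Finset.sum_congr rfl fun u _ => ?_
      rw [hPuzdef]; dsimp only
      rw [Finset.sum_mul]
      refine Finset.sum_congr rfl fun ω _ => ?_
      by_cases h2 : U ω = u <;> by_cases h3 : Z ω = z <;> simp [h2, h3]
    -- total probability over x
    have hsumPxz : ∑ x ∈ Finset.univ.image X, Pxz x z = Pz z := by
      have h := fiber_sum X fun ω x => if Z ω = z then p ω else 0
      rw [hPzdef]; dsimp only
      rw [h]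
      refine Finset.sum_congr rfl fun x _ => ?_
      rw [hPxzdef]; dsimp only
      refine Finset.sum_congr rfl fun ω _ => ?_
      by_cases h1 : X ω = x <;> by_cases h2 : Z ω = z <;> simp [h1, h2]
    have hPxznn : ∀ x, 0 ≤ Pxz x z := fun x => Finset.sum_nonneg fun ω _ => by
      split_ifs; exacts [hp ω, le_rfl]
    -- key identity: T x a z * Pz z = Pxz x z * G a z
    have key : ∀ x a, T x a z * Pz z = Pxz x z * G a z := by
      intro x a
      rw [hT, hG, Finset.sum_mul, Finset.mul_sum]
      refine Finset.sum_congr rfl fun u _ => ?_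
      have := hCI x z u hpos
      calc Pxuz x u z * f a z u * Pz z = Pxuz x u z * Pz z * f a z u := by ring
        _ = Pxz x z * Puz u z * f a z u := by rw [hPxuzdef, hPzdef, hPxzdef, hPuzdef]; dsimp only; rw [this]
        _ = Pxz x z * (Puz u z * f a z u) := by ring
    -- finish: multiply through by Pz z > 0
    rw [← mul_le_mul_iff_left₀ hpos]
    calc (∑ x ∈ Finset.univ.image X, T x (d x z) z) * Pz z
        = ∑ x ∈ Finset.univ.image X, Pxz x z * G (d x z) z := by
          rw [Finset.sum_mul]; exact Finset.sum_congr rfl fun x _ => key x (d x z)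
      _ ≤ ∑ x ∈ Finset.univ.image X, Pxz x z * G (d' z) z :=
          Finset.sum_le_sum fun x _ => mul_le_mul_of_nonneg_left (hd' z (d x z)) (hPxznn x)
      _ = Pz z * G (d' z) z := by rw [← Finset.sum_mul, hsumPxz]
      _ = G (d' z) z * Pz z := by ring
end
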